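/- arXiv:1603.02093 — 11 statements merged into one kernel-verified Lean document; each statement's English description precedes it below -/
import Mathlib

section
/- If an element x of a commutative binoid has a loop of length 1 with initial pair r+1 > r where r ≥ 2 and rx ≠ ∞, then (r-1)x is a torsion element: 2(r-1)x = 2rx but (r-1)x ≠ rx. -/
/-- If `x` has a loop of length 1 with initial pair `r+1 > r`, `r ≥ 2`, and `r • x ≠ ∞`,
then `(r-1) • x` is a torsion element: `2 • ((r-1) • x) = 2 • (r • x)` but `(r-1) • x ≠ r • x`. -/
theorem stmt_1 {M : Type*} [AddCommMonoid M] (inf : M)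
    (habs : ∀ a : M, a + inf = inf) (x : M) (r : ℕ) (hr : 2 ≤ r)
    (hloop : r • x = (r + 1) • x)
    (hmin : ∀ r' s' : ℕ, r' < s' → r' • x = s' • x → r ≤ r')
    (hninf : r • x ≠ inf) :
    2 • ((r - 1) • x) = 2 • (r • x) ∧ (r - 1) • x ≠ r • x := by
  have key : ∀ k : ℕ, (r + k) • x = r • x := by
    intro k
    induction k with
    | zero => rfl
    | succ n ih =>
      calc (r + (n + 1)) • x = (r + 1) • x + n • x := by
            rw [← add_nsmul]; ring_nf
        _ = r • x + n • x := by rw [← hloop]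
        _ = (r + n) • x := by rw [← add_nsmul]
        _ = r • x := ih
  constructor
  · have h1 : 2 • ((r - 1) • x) = (r + (r - 2)) • x := by
      rw [← mul_nsmul]
      congr 1
      omega
    have h2 : 2 • (r • x) = (r + r) • x := by
      rw [← mul_nsmul]
      congr 1
      omega
    rw [h1, h2, key, key]
  · intro h
    have := hmin (r - 1) r (by omega) (by rw [h])
    omega
end

section
/- Let M be a commutative binoid generated by a single element x that is neither nilpotent nor a unit. Then the following are equivalent: (a) x is cancellative; (b) M is infinite; (c) x is loopfree. Moreover, if additionally x ≠ 2x, these are also equivalent to (d) M is torsion-free, and (e) M is isomorphic to ℕ with an absorbing element ∞ adjoined. -/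
/-- For a one-generated commutative binoid `M` with generator `x` neither nilpotent nor a
unit: (a) `x` cancellative ↔ (b) `M` infinite ↔ (c) `x` loopfree; and if moreover `x ≠ 2x`,
also ↔ (d) `M` torsion-free ↔ (e) `M ≅ ℕ^∞`. -/
theorem stmt_2 {M : Type*} [AddCommMonoid M] (inf : M)
    (habs : ∀ a : M, a + inf = inf) (x : M)
    (hgen : ∀ a : M, a = inf ∨ ∃ n : ℕ, a = n • x)
    (hnotnil : ∀ n : ℕ, 1 ≤ n → n • x ≠ inf)
    (hnotunit : ¬ ∃ y : M, x + y = 0) :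
    (((∀ a b : M, x + a = x + b → x + a ≠ inf → a = b) ↔ Infinite M) ∧
      (Infinite M ↔ ∀ n m : ℕ, n • x = m • x → n = m)) ∧
    (x ≠ 2 • x →
      (((∀ n m : ℕ, n • x = m • x → n = m) ↔
          (∀ n : ℕ, 1 ≤ n → ∀ a b : M, a ≠ inf → b ≠ inf → n • a = n • b → a = b)) ∧
        ((∀ n : ℕ, 1 ≤ n → ∀ a b : M, a ≠ inf → b ≠ inf → n • a = n • b → a = b) ↔
          ∃ e : M ≃+ WithTop ℕ, e inf = ⊤))) := by
  have hx : x ≠ inf := by simpa using hnotnil 1 le_rfl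
  have h0 : (0 : M) ≠ inf := by
    intro h
    exact hx (by rw [← add_zero x, h, habs])
  -- loopfree → cancellative
  have Llc : (∀ n m : ℕ, n • x = m • x → n = m) →
      (∀ a b : M, x + a = x + b → x + a ≠ inf → a = b) := by
    intro hl a b hab hne
    rcases hgen a with ha | ⟨p, rfl⟩
    · exact absurd (by rw [ha, habs]) hne
    rcases hgen b with hb | ⟨q, rfl⟩
    · rw [hb, habs] at hab; exact absurd hab hne
    have h1 : (p + 1) • x = (q + 1) • x := by
      rw [succ_nsmul, succ_nsmul, add_comm (p • x) x, add_comm (q • x) x]; exact hab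
    have : p = q := by have := hl _ _ h1; omega
    rw [this]
  -- cancellative → loopfree
  have Lcl : (∀ a b : M, x + a = x + b → x + a ≠ inf → a = b) →
      (∀ n m : ℕ, n • x = m • x → n = m) := by
    intro hc n
    induction n with
    | zero =>
      intro m hm
      cases m with
      | zero => rfl
      | succ k =>
        exfalso
        exact hnotunit ⟨k • x, by rw [add_comm x, ← succ_nsmul, ← hm, zero_nsmul]⟩
    | succ n ih =>
      intro m hm
      cases m with
      | zero =>
        exfalso
        exact hnotunit ⟨n • x, by rw [add_comm x, ← succ_nsmul, hm, zero_nsmul]⟩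
      | succ k =>
        have h1 : x + n • x = x + k • x := by
          rw [add_comm x, add_comm x, ← succ_nsmul, ← succ_nsmul]; exact hm
        have h2 : x + n • x ≠ inf := by
          rw [add_comm x, ← succ_nsmul]; exact hnotnil (n + 1) (by omega)
        have := ih _ (hc _ _ h1 h2)
        omega
  -- loopfree → infinite
  have Lli : (∀ n m : ℕ, n • x = m • x → n = m) → Infinite M := by
    intro hl
    exact Infinite.of_injective (fun n : ℕ => n • x) (fun a b h => hl a b h)
  -- infinite → loopfree
  have Lil : Infinite M → (∀ n m : ℕ, n • x = m • x → n = m) := by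
    intro hi n0 m0 hnm0
    by_contra hne0
    obtain ⟨n, m, hlt, hnm⟩ : ∃ n m : ℕ, n < m ∧ n • x = m • x := by
      rcases Nat.lt_or_ge n0 m0 with h | h
      · exact ⟨n0, m0, h, hnm0⟩
      · exact ⟨m0, n0, by omega, hnm0.symm⟩
    have key : ∀ k : ℕ, ∃ j, j < m ∧ k • x = j • x := by
      intro k
      induction k using Nat.strong_induction_on with
      | _ k ih =>
        rcases lt_or_ge k m with hk | hk
        · exact ⟨k, hk, rfl⟩
        · have h1 : k • x = (k - m + n) • x := by
            calc k • x = ((k - m) + m) • x := by rw [Nat.sub_add_cancel hk]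
              _ = (k - m) • x + m • x := add_nsmul x _ _
              _ = (k - m) • x + n • x := by rw [hnm]
              _ = (k - m + n) • x := (add_nsmul x _ _).symm
          obtain ⟨j, hj, hj2⟩ := ih (k - m + n) (by omega)
          exact ⟨j, hj, h1.trans hj2⟩
    have hfin : Finite M := by
      apply Finite.of_surjective
        (fun o : Option (Fin m) => o.elim inf (fun j => (j : ℕ) • x))
      intro a
      rcases hgen a with ha | ⟨k, rfl⟩
      · exact ⟨none, ha.symm⟩
      · obtain ⟨j, hj, he⟩ := key k
        exact ⟨some ⟨j, hj⟩, he.symm⟩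
    exact (not_finite_iff_infinite.mpr hi) hfin
  -- loopfree → torsion-free
  have Ltf : (∀ n m : ℕ, n • x = m • x → n = m) →
      (∀ n : ℕ, 1 ≤ n → ∀ a b : M, a ≠ inf → b ≠ inf → n • a = n • b → a = b) := by
    intro hl n hn a b ha hb hab
    rcases hgen a with h | ⟨p, rfl⟩
    · exact absurd h ha
    rcases hgen b with h | ⟨q, rfl⟩
    · exact absurd h hb
    have h1 : (n * p) • x = (n * q) • x := by
      rw [mul_smul, mul_smul]; exact hab
    have : p = q := Nat.eq_of_mul_eq_mul_left hn (hl _ _ h1)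
    rw [this]
  -- torsion-free → loopfree (uses x ≠ 2 • x)
  have Ltl : x ≠ 2 • x →
      (∀ n : ℕ, 1 ≤ n → ∀ a b : M, a ≠ inf → b ≠ inf → n • a = n • b → a = b) →
      (∀ n m : ℕ, n • x = m • x → n = m) := by
    intro hx2 ht n0 m0 hnm0
    by_contra hne0
    obtain ⟨n, m, hlt, hnm⟩ : ∃ n m : ℕ, n < m ∧ n • x = m • x := by
      rcases Nat.lt_or_ge n0 m0 with h | h
      · exact ⟨n0, m0, h, hnm0⟩
      · exact ⟨m0, n0, by omega, hnm0.symm⟩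
    set d := m - n with hd
    have hd1 : 1 ≤ d := by omega
    have hper : ∀ k, n ≤ k → k • x = (k + d) • x := by
      intro k hk
      calc k • x = ((k - n) + n) • x := by rw [Nat.sub_add_cancel hk]
        _ = (k - n) • x + n • x := add_nsmul x _ _
        _ = (k - n) • x + m • x := by rw [hnm]
        _ = ((k - n) + m) • x := (add_nsmul x _ _).symm
        _ = (k + d) • x := by congr 1; omega
    have hper2 : ∀ j k, n ≤ k → k • x = (k + j * d) • x := by
      intro j
      induction j with
      | zero => intro k _; simp
      | succ j ih =>
        intro k hk
        have := hper (k + j * d) (by omega)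
        rw [ih k hk, this]
        congr 1; ring
    have hN : x = (1 + d) • x := by
      apply ht (n + 1) (by omega) x ((1 + d) • x) hx (hnotnil _ (by omega))
      calc (n + 1) • x = ((n + 1) + (n + 1) * d) • x := hper2 (n + 1) (n + 1) (by omega)
        _ = ((n + 1) * (1 + d)) • x := by congr 1; ring
        _ = (n + 1) • ((1 + d) • x) := mul_smul _ _ _
    have hstep : ∀ k, 1 ≤ k → k • x = (k + d) • x := by
      intro k hk
      calc k • x = ((k - 1) + 1) • x := by rw [Nat.sub_add_cancel hk]
        _ = (k - 1) • x + x := by rw [succ_nsmul]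
        _ = (k - 1) • x + (1 + d) • x := by rw [← hN]
        _ = ((k - 1) + (1 + d)) • x := (add_nsmul x _ _).symm
        _ = (k + d) • x := by congr 1; omega
    have hdd : d • x = (2 * d) • x := by
      rw [hstep d hd1]; congr 1; omega
    have : x = 2 • x := by
      apply ht d hd1 x (2 • x) hx (hnotnil 2 (by omega))
      calc d • x = (2 * d) • x := hdd
        _ = (d * 2) • x := by congr 1; ring
        _ = d • (2 • x) := mul_smul _ _ _
    exact hx2 this
  -- loopfree → isomorphism with ℕ^∞
  have Lle : (∀ n m : ℕ, n • x = m • x → n = m) →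
      ∃ e : M ≃+ WithTop ℕ, e inf = ⊤ := by
    intro hl
    have hmapadd : ∀ a b : WithTop ℕ,
        WithTop.recTopCoe (C := fun _ => M) inf (fun k => k • x) (a + b) =
        WithTop.recTopCoe (C := fun _ => M) inf (fun k => k • x) a +
        WithTop.recTopCoe (C := fun _ => M) inf (fun k => k • x) b := by
      intro a b
      induction a using WithTop.recTopCoe with
      | top =>
        rw [top_add, WithTop.recTopCoe_top, add_comm]
        exact (habs _).symm
      | coe k =>
        induction b using WithTop.recTopCoe with
        | top => rw [add_top, WithTop.recTopCoe_top]; exact (habs _).symm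
        | coe l =>
          rw [← WithTop.coe_add, WithTop.recTopCoe_coe, WithTop.recTopCoe_coe,
            WithTop.recTopCoe_coe, add_nsmul]
    let F : WithTop ℕ →+ M :=
      { toFun := fun t => WithTop.recTopCoe (C := fun _ => M) inf (fun k => k • x) t
        map_zero' := by
          have h00 : (0 : WithTop ℕ) = WithTop.some (0 : ℕ) := by norm_cast
          rw [h00]
          show WithTop.recTopCoe (C := fun _ => M) inf (fun k => k • x)
            (WithTop.some (0 : ℕ)) = 0
          rw [WithTop.recTopCoe_coe, zero_nsmul]
        map_add' := hmapadd }
    have hFtop : F ⊤ = inf := by simp [F]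
    have hFcoe : ∀ k : ℕ, F (WithTop.some k) = k • x := fun k => by simp [F]; norm_cast
    have hbij : Function.Bijective F := by
      constructor
      · intro a b hab
        induction a using WithTop.recTopCoe with
        | top =>
          induction b using WithTop.recTopCoe with
          | top => rfl
          | coe l =>
            exfalso
            rw [hFtop, hFcoe] at hab
            rcases Nat.eq_zero_or_pos l with h | h
            · subst h; exact h0 (by simpa using hab.symm)
            · exact hnotnil l h hab.symm
        | coe k =>
          induction b using WithTop.recTopCoe with
          | top =>
            exfalso
            rw [hFtop, hFcoe] at hab
            rcases Nat.eq_zero_or_pos k with h | h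
            · subst h; exact h0 (by simpa using hab)
            · exact hnotnil k h hab
          | coe l =>
            rw [hFcoe, hFcoe] at hab
            exact congrArg WithTop.some (hl _ _ hab)
      · intro a
        rcases hgen a with ha | ⟨k, rfl⟩
        · exact ⟨⊤, by rw [hFtop, ha]⟩
        · exact ⟨WithTop.some k, hFcoe k⟩
    refine ⟨(AddEquiv.ofBijective F hbij).symm, ?_⟩
    rw [AddEquiv.symm_apply_eq]
    exact hFtop.symm
  -- isomorphism → torsion-free
  have Let : (∃ e : M ≃+ WithTop ℕ, e inf = ⊤) →
      (∀ n : ℕ, 1 ≤ n → ∀ a b : M, a ≠ inf → b ≠ inf → n • a = n • b → a = b) := by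
    rintro ⟨e, he⟩ n hn a b ha hb hab
    have hcoe : ∀ (k p : ℕ), k • (WithTop.some p) = WithTop.some (k * p) := by
      intro k p
      induction k with
      | zero => norm_cast
      | succ k ih => rw [succ_nsmul, ih]; norm_cast; ring
    have hea : e a ≠ ⊤ := fun h => ha (e.injective (h.trans he.symm))
    have heb : e b ≠ ⊤ := fun h => hb (e.injective (h.trans he.symm))
    obtain ⟨p, hp⟩ := WithTop.ne_top_iff_exists.mp hea
    obtain ⟨q, hq⟩ := WithTop.ne_top_iff_exists.mp heb
    have h1 : e (n • a) = e (n • b) := congrArg e hab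
    rw [map_nsmul, map_nsmul, ← hp, ← hq, hcoe, hcoe] at h1
    have h2 : n * p = n * q := by exact_mod_cast h1
    have hpq : p = q := Nat.eq_of_mul_eq_mul_left hn h2
    apply e.injective
    rw [← hp, ← hq, hpq]
  refine ⟨⟨⟨fun hc => Lli (Lcl hc), fun hi => Llc (Lil hi)⟩, ⟨Lil, Lli⟩⟩, fun hx2 => ⟨⟨Ltf, Ltl hx2⟩, ⟨fun ht => Lle (Ltl hx2 ht), Let⟩⟩⟩
end

section
/- Let M be a commutative binoid generated by two elements x and y, and suppose M is an infinite binoid group (all non-∞ elements are invertible). Then the intersection of the submonoids generated by x and by y is trivial: ⟨x⟩ ∩ ⟨y⟩ = {0, ∞}. -/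
/-- If `M` is an infinite binoid group generated (as a binoid) by two elements `x`, `y`,
then `⟨x⟩ ∩ ⟨y⟩ = {0, ∞}`. -/
theorem stmt_5 {M : Type*} [AddCommMonoid M] (inf : M)
    (habs : ∀ a : M, a + inf = inf) (x y : M)
    (hgen : ∀ a : M, a = inf ∨ ∃ n m : ℕ, a = n • x + m • y)
    (hgroup : ∀ a : M, a ≠ inf → ∃ b : M, a + b = 0)
    (hinfinite : Infinite M) :
    {a : M | (∃ n : ℕ, a = n • x) ∨ a = inf} ∩ {a : M | (∃ m : ℕ, a = m • y) ∨ a = inf}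
      = {0, inf} := by
  -- 0 ≠ inf
  have h0inf : (0 : M) ≠ inf := by
    intro h
    obtain ⟨b, hb⟩ := exists_ne inf
    apply hb
    rw [← add_zero b, h, habs]
  -- (n+1) • inf = inf
  have hsinf : ∀ n : ℕ, (n + 1) • inf = inf := by
    intro n
    rw [succ_nsmul, habs]
  -- mod lemma
  have hmod : ∀ (z : M) (c : ℕ), c • z = 0 → ∀ n : ℕ, n • z = (n % c) • z := by
    intro z c hc n
    conv_lhs => rw [← Nat.div_add_mod n c]
    rw [add_smul, mul_comm, mul_smul, hc, smul_zero, zero_add]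
  ext a
  simp only [Set.mem_inter_iff, Set.mem_setOf_eq, Set.mem_insert_iff, Set.mem_singleton_iff]
  constructor
  · rintro ⟨hx, hy⟩
    rcases hx with ⟨n, hn⟩ | hi
    · rcases hy with ⟨m, hm⟩ | hi
      · -- a = n • x = m • y
        by_cases ha : a = inf
        · right; exact ha
        rcases Nat.eq_zero_or_pos n with rfl | hn1
        · left; simpa using hn
        rcases Nat.eq_zero_or_pos m with rfl | hm1
        · left; simpa using hm
        -- derive a contradiction: M would be finite
        exfalso
        have hx' : x ≠ inf := by
          intro h
          apply ha
          obtain ⟨n', rfl⟩ := Nat.exists_eq_add_of_lt hn1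
          rw [hn, h, zero_add, hsinf]
        have hy' : y ≠ inf := by
          intro h
          apply ha
          obtain ⟨m', rfl⟩ := Nat.exists_eq_add_of_lt hm1
          rw [hm, h, zero_add, hsinf]
        -- inverse of x
        obtain ⟨b, hb⟩ := hgroup x hx'
        have hb' : b ≠ inf := by
          intro h
          apply h0inf
          rw [← hb, h, habs]
        obtain ⟨p, q, rfl⟩ := (hgen b).resolve_left hb'
        -- inverse of y
        obtain ⟨c, hc⟩ := hgroup y hy'
        have hc' : c ≠ inf := by
          intro h
          apply h0inf
          rw [← hc, h, habs]
        obtain ⟨r, s, rfl⟩ := (hgen c).resolve_left hc'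
        -- (p+1) • x + q • y = 0
        have h1 : (p + 1) • x + q • y = 0 := by
          rw [succ_nsmul]
          rw [← hb]; abel
        have h2 : r • x + (s + 1) • y = 0 := by
          rw [succ_nsmul]
          rw [← hc]; abel
        -- x has finite order k
        set k := m * (p + 1) + q * n with hk_def
        have hk1 : 1 ≤ k := by
          calc 1 ≤ m := hm1
            _ ≤ m * (p + 1) := Nat.le_mul_of_pos_right _ (by omega)
            _ ≤ k := by rw [hk_def]; exact Nat.le_add_right _ _
        have hkx : k • x = 0 := by
          have e1 : (m * (p + 1)) • x + (m * q) • y = 0 := by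
            have := congrArg (fun z => m • z) h1
            simpa [smul_add, mul_smul, ← mul_smul] using this
          have e2 : (m * q) • y = (q * n) • x := by
            rw [mul_comm m q, mul_smul, ← hm, hn, ← mul_smul]
          rw [hk_def, add_smul, ← e2, e1]
        -- y has finite order l
        set l := r * m + n * (s + 1) with hl_def
        have hl1 : 1 ≤ l := by
          calc 1 ≤ n := hn1
            _ ≤ n * (s + 1) := Nat.le_mul_of_pos_right _ (by omega)
            _ ≤ l := by rw [hl_def]; exact Nat.le_add_left _ _
        have hly : l • y = 0 := by
          have e1 : (n * r) • x + (n * (s + 1)) • y = 0 := by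
            have := congrArg (fun z => n • z) h2
            simpa [smul_add, mul_smul, ← mul_smul] using this
          have e2 : (n * r) • x = (r * m) • y := by
            rw [mul_comm n r, mul_smul, ← hn, hm, ← mul_smul]
          rw [hl_def, add_smul, ← e2]
          rw [e1]
        -- M is finite: contradiction
        have hfin : (Set.univ : Set M).Finite := by
          have : (Set.univ : Set M) ⊆
              insert inf ((fun p : ℕ × ℕ => p.1 • x + p.2 • y) '' (Set.Iio k ×ˢ Set.Iio l)) := by
            intro z _
            rcases hgen z with rfl | ⟨u, v, rfl⟩
            · exact Set.mem_insert _ _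
            · right
              refine ⟨(u % k, v % l), ⟨Nat.mod_lt _ hk1, Nat.mod_lt _ hl1⟩, ?_⟩
              simp only
              rw [← hmod x k hkx u, ← hmod y l hly v]
          exact Set.Finite.subset (Set.Finite.insert _
            (Set.Finite.image _ ((Set.finite_Iio k).prod (Set.finite_Iio l)))) this
        exact Set.infinite_univ hfin
      · right; exact hi
    · right; exact hi
  · rintro (rfl | rfl)
    · exact ⟨Or.inl ⟨0, by simp⟩, Or.inl ⟨0, by simp⟩⟩
    · exact ⟨Or.inr rfl, Or.inr rfl⟩
end

section
/- Let M be an infinite two-generated commutative binoid group with generators x and y. Then there exist n, m ≥ 1 minimal with respect to nx + my = 0, in the sense that for any other pair r, s ≥ 1 with rx + sy = 0 one has r = ln and s = lm for some l ≥ 1. -/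
/-- In an infinite two-generated binoid group with generators `x`, `y` there exist
`n, m ≥ 1` minimal with `n • x + m • y = 0`: every pair `r, s ≥ 1` with
`r • x + s • y = 0` is an integer multiple of `(n, m)`. -/
theorem stmt_6 {M : Type*} [AddCommMonoid M] (inf : M)
    (habs : ∀ a : M, a + inf = inf) (x y : M)
    (hgen : ∀ a : M, a = inf ∨ ∃ n m : ℕ, a = n • x + m • y)
    (hgroup : ∀ a : M, a ≠ inf → ∃ b : M, a + b = 0)
    (hinfinite : Infinite M) :
    ∃ n m : ℕ, 1 ≤ n ∧ 1 ≤ m ∧ n • x + m • y = 0 ∧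
      ∀ r s : ℕ, 1 ≤ r → 1 ≤ s → r • x + s • y = 0 →
        ∃ l : ℕ, 1 ≤ l ∧ r = l * n ∧ s = l * m := by
  haveI := hinfinite
  -- 0 ≠ inf
  have h0 : (0 : M) ≠ inf := by
    intro h
    have hsub : ∀ a : M, a = inf := fun a => by
      calc a = a + 0 := (add_zero a).symm
        _ = a + inf := by rw [h]
        _ = inf := habs a
    haveI : Finite M := Finite.of_surjective (fun _ : Unit => inf)
      (fun a => ⟨(), (hsub a).symm⟩)
    exact not_finite M
  -- reduction mod a torsion order
  have modx : ∀ (z : M) (d : ℕ), d • z = 0 → ∀ n : ℕ, n • z = (n % d) • z := by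
    intro z d hz n
    conv_lhs => rw [← Nat.div_add_mod n d]
    rw [add_nsmul, mul_nsmul, hz, smul_zero, zero_add]
  -- if both x and y are torsion, M is finite: contradiction
  have finA : ∀ d : ℕ, 1 ≤ d → d • x = 0 → d • y = 0 → False := by
    intro d hd hdx hdy
    have hdpos : 0 < d := hd
    haveI : Finite M := by
      apply Finite.of_surjective (fun p : Option (Fin d × Fin d) =>
        match p with
        | none => inf
        | some (i, j) => (i : ℕ) • x + (j : ℕ) • y)
      intro a
      rcases hgen a with h | ⟨n, m, h⟩
      · exact ⟨none, h.symm⟩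
      · refine ⟨some (⟨n % d, Nat.mod_lt _ hdpos⟩, ⟨m % d, Nat.mod_lt _ hdpos⟩), ?_⟩
        simp only
        rw [← modx x d hdx n, ← modx y d hdy m, h]
    exact not_finite M
  -- determinant computation
  have gen : ∀ (z w : M) (n m r s : ℕ), n • z + m • w = 0 → r • z + s • w = 0 →
      s * n ≤ m * r → (m * r - s * n) • z = 0 := by
    intro z w n m r s h1 h2 hle
    have h3 : (m * r) • z + (m * s) • w = 0 := by
      rw [mul_comm m r, mul_comm m s, mul_nsmul, mul_nsmul, ← smul_add, h2, smul_zero]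
    have h4 : (s * n) • z + (s * m) • w = 0 := by
      rw [mul_comm s n, mul_comm s m, mul_nsmul, mul_nsmul, ← smul_add, h1, smul_zero]
    calc (m * r - s * n) • z
        = (m * r - s * n) • z + ((s * n) • z + (s * m) • w) := by rw [h4, add_zero]
      _ = ((m * r - s * n) + s * n) • z + (s * m) • w := by rw [← add_assoc, ← add_nsmul]
      _ = (m * r) • z + (m * s) • w := by rw [Nat.sub_add_cancel hle, mul_comm s m]
      _ = 0 := h3
  -- any two relations are proportional
  have key : ∀ n m r s : ℕ, n • x + m • y = 0 → r • x + s • y = 0 → r * m = n * s := by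
    intro n m r s h1 h2
    by_contra hne
    rcases Nat.lt_or_ge (r * m) (n * s) with hlt | hge
    · -- d = n*s - r*m ≥ 1
      have dx0 : (s * n - m * r) • x = 0 :=
        gen x y r s n m h2 h1 (by rw [mul_comm m r, mul_comm s n]; exact le_of_lt hlt)
      have dy0 : (n * s - r * m) • y = 0 :=
        gen y x m n s r (by rw [add_comm]; exact h1) (by rw [add_comm]; exact h2)
          (le_of_lt hlt)
      have heq : s * n - m * r = n * s - r * m := by rw [mul_comm s n, mul_comm m r]
      exact finA (n * s - r * m) (by omega) (heq ▸ dx0) dy0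
    · have hlt : n * s < r * m := lt_of_le_of_ne hge (fun h => hne h.symm)
      have dx0 : (m * r - s * n) • x = 0 :=
        gen x y n m r s h1 h2 (by rw [mul_comm s n, mul_comm m r]; exact le_of_lt hlt)
      have dy0 : (r * m - n * s) • y = 0 :=
        gen y x s r m n (by rw [add_comm]; exact h2) (by rw [add_comm]; exact h1)
          (le_of_lt hlt)
      have heq : m * r - s * n = r * m - n * s := by rw [mul_comm m r, mul_comm s n]
      exact finA (r * m - n * s) (by omega) (heq ▸ dx0) dy0
  -- neither generator can be inf
  have degenerate : ∀ (z w : M), (∀ a : M, a = inf ∨ ∃ n m : ℕ, a = n • z + m • w) →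
      z = inf → False := by
    intro z w hg hz
    have habs' : ∀ n m : ℕ, 1 ≤ n → n • z + m • w = inf := by
      intro n m hn
      obtain ⟨k, rfl⟩ : ∃ k, n = k + 1 := ⟨n - 1, by omega⟩
      calc (k + 1) • z + m • w = (k • z + z) + m • w := by rw [succ_nsmul]
        _ = (k • z + m • w) + z := by rw [add_right_comm]
        _ = (k • z + m • w) + inf := by rw [hz]
        _ = inf := habs _
    -- w ≠ inf
    have hw : w ≠ inf := by
      intro hw
      have hwinf : ∀ m : ℕ, 1 ≤ m → m • w = inf := by
        intro m hm
        obtain ⟨k, rfl⟩ : ∃ k, m = k + 1 := ⟨m - 1, by omega⟩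
        rw [succ_nsmul, hw, habs]
      haveI : Finite M := by
        apply Finite.of_surjective (fun p : Option Unit =>
          match p with | none => inf | some _ => (0 : M))
        intro a
        rcases hg a with h | ⟨n, m, h⟩
        · exact ⟨none, h.symm⟩
        · rcases Nat.eq_zero_or_pos n with hn | hn
          · rcases Nat.eq_zero_or_pos m with hm | hm
            · exact ⟨some (), by simp [h, hn, hm]⟩
            · refine ⟨none, ?_⟩
              show inf = a
              rw [h, hn, zero_nsmul, zero_add, hwinf m hm]
          · refine ⟨none, ?_⟩
            show inf = a
            rw [h, habs' n m hn]
      exact not_finite M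
    obtain ⟨b, hb⟩ := hgroup w hw
    have hbne : b ≠ inf := by
      intro h; rw [h, habs] at hb; exact h0 hb.symm
    rcases hg b with h | ⟨n, m, h⟩
    · exact hbne h
    have hn0 : n = 0 := by
      by_contra hn
      exact hbne (h.trans (habs' n m (by omega)))
    have hb' : b = m • w := by rw [h, hn0, zero_nsmul, zero_add]
    have he : (m + 1) • w = 0 := by
      rw [succ_nsmul, ← hb', add_comm, hb]
    -- now w has torsion order, so M is finite
    haveI : Finite M := by
      apply Finite.of_surjective (fun p : Option (Fin (m + 1)) =>
        match p with | none => inf | some j => (j : ℕ) • w)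
      intro a
      rcases hg a with ha | ⟨n', m', ha⟩
      · exact ⟨none, ha.symm⟩
      · rcases Nat.eq_zero_or_pos n' with hn' | hn'
        · refine ⟨some ⟨m' % (m + 1), Nat.mod_lt _ (by omega)⟩, ?_⟩
          show (((m' % (m + 1) : ℕ)) : ℕ) • w = a
          rw [← modx w (m + 1) he m', ha, hn', zero_nsmul, zero_add]
        · refine ⟨none, ?_⟩
          show inf = a
          rw [ha, habs' n' m' hn']
    exact not_finite M
  have hx : x ≠ inf := fun h => degenerate x y hgen h
  have hy : y ≠ inf := fun h =>
    degenerate y x (fun a => (hgen a).imp id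
      (fun ⟨n, m, h⟩ => ⟨m, n, by rw [h, add_comm]⟩)) h
  -- x + y ≠ inf
  obtain ⟨x', hx'⟩ := hgroup x hx
  obtain ⟨y', hy'⟩ := hgroup y hy
  have hxy : x + y ≠ inf := by
    intro h
    have : (x + y) + (x' + y') = inf := by rw [h]; rw [add_comm]; exact habs _
    have h2 : (x + y) + (x' + y') = 0 := by
      calc (x + y) + (x' + y') = (x + x') + (y + y') := by abel
        _ = 0 := by rw [hx', hy', add_zero]
    exact h0 (h2 ▸ this)
  obtain ⟨b, hb⟩ := hgroup _ hxy
  have hbne : b ≠ inf := by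
    intro h; rw [h, habs] at hb; exact h0 hb.symm
  obtain ⟨a, c, hbac⟩ := (hgen b).resolve_left hbne
  have hrel : (a + 1) • x + (c + 1) • y = 0 := by
    calc (a + 1) • x + (c + 1) • y = (a • x + x) + (c • y + y) := by
          rw [succ_nsmul, succ_nsmul]
      _ = (x + y) + (a • x + c • y) := by abel
      _ = (x + y) + b := by rw [hbac]
      _ = 0 := hb
  have hex : ∃ n : ℕ, ∃ m : ℕ, 1 ≤ n ∧ 1 ≤ m ∧ n • x + m • y = 0 :=
    ⟨a + 1, c + 1, by omega, by omega, hrel⟩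
  classical
  set n := Nat.find hex with hn_def
  obtain ⟨m, hn1, hm1, hnm⟩ := Nat.find_spec hex
  refine ⟨n, m, hn1, hm1, hnm, ?_⟩
  intro r
  induction r using Nat.strong_induction_on with
  | _ r ih =>
    intro s hr hs hrs
    have hkey : r * m = n * s := key n m r s hnm hrs
    have hnr : n ≤ r := by
      by_contra hlt
      exact Nat.find_min hex (show r < n by omega) ⟨s, hr, hs, hrs⟩
    rcases eq_or_lt_of_le hnr with heq | hlt
    · -- r = n, so s = m
      have : m = s := Nat.eq_of_mul_eq_mul_left (by omega) (heq ▸ hkey)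
      exact ⟨1, le_refl 1, by omega, by omega⟩
    · -- r > n, so s > m, descend
      have hms : m < s := by
        have h1 : n * m < r * m := Nat.mul_lt_mul_of_lt_of_le hlt (le_refl m) (by omega)
        rw [hkey] at h1
        exact Nat.lt_of_mul_lt_mul_left h1
      have hsplit : r • x + s • y = ((r - n) • x + (s - m) • y) + (n • x + m • y) := by
        have e1 : ((r - n) • x + (s - m) • y) + (n • x + m • y)
            = ((r - n) • x + n • x) + ((s - m) • y + m • y) := by abel
        rw [e1, ← add_nsmul, ← add_nsmul, Nat.sub_add_cancel (le_of_lt hlt),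
          Nat.sub_add_cancel (le_of_lt hms)]
      have hsub : (r - n) • x + (s - m) • y = 0 := by
        rw [hsplit, hnm, add_zero] at hrs
        exact hrs
      obtain ⟨l, hl1, hl2, hl3⟩ :=
        ih (r - n) (by omega) (s - m) (by omega) (by omega) hsub
      refine ⟨l + 1, by omega, ?_, ?_⟩
      · rw [add_mul, one_mul, ← hl2, Nat.sub_add_cancel (le_of_lt hlt)]
      · rw [add_mul, one_mul, ← hl3, Nat.sub_add_cancel (le_of_lt hms)]
end

section
/- Let M be an infinite two-generated commutative binoid group with generators x, y, and let n, m ≥ 1 be minimal with nx + my = 0 (so any relation rx + sy = 0 with r,s ≥ 1 is an integer multiple of (n,m)). Then M is torsion-free if and only if gcd(n, m) = 1. -/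
/-- Let `M` be an infinite two-generated binoid group with generators `x`, `y`, and
`n, m ≥ 1` minimal with `n • x + m • y = 0`. Then `M` is torsion-free iff `gcd(n, m) = 1`. -/
theorem stmt_7 {M : Type*} [AddCommMonoid M] (inf : M)
    (habs : ∀ a : M, a + inf = inf) (x y : M)
    (hgen : ∀ a : M, a = inf ∨ ∃ i j : ℕ, a = i • x + j • y)
    (hgroup : ∀ a : M, a ≠ inf → ∃ b : M, a + b = 0)
    (hinfinite : Infinite M)
    (n m : ℕ) (hn : 1 ≤ n) (hm : 1 ≤ m) (hrel : n • x + m • y = 0)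
    (hminrel : ∀ r s : ℕ, 1 ≤ r → 1 ≤ s → r • x + s • y = 0 →
      ∃ l : ℕ, 1 ≤ l ∧ r = l * n ∧ s = l * m) :
    (∀ k : ℕ, 1 ≤ k → ∀ a b : M, a ≠ inf → b ≠ inf → k • a = k • b → a = b) ↔
      Nat.gcd n m = 1 := by
  -- zero is not the absorbing element
  have h0 : (0 : M) ≠ inf := by
    intro h
    have htriv : ∀ a : M, a = inf := fun a => by rw [← add_zero a, h, habs]
    obtain ⟨a, b, hab⟩ := (inferInstance : Nontrivial M)
    exact hab ((htriv a).trans (htriv b).symm)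
  -- sum of non-inf elements is non-inf
  have hadd : ∀ a b : M, a ≠ inf → b ≠ inf → a + b ≠ inf := by
    intro a b ha hb h
    obtain ⟨a', ha'⟩ := hgroup a ha
    apply hb
    have : b = a' + (a + b) := by
      rw [← add_assoc, add_comm a', ha', zero_add]
    rw [h, habs] at this
    exact this
  -- smul of inf
  have hsinf : ∀ k : ℕ, 1 ≤ k → k • inf = inf := by
    intro k hk
    obtain ⟨j, rfl⟩ := Nat.exists_eq_add_of_le hk
    rw [add_comm, succ_nsmul, habs]
  have hx : x ≠ inf := by
    intro h
    apply h0
    rw [← hrel, h, hsinf n hn, add_comm, habs]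
  have hy : y ≠ inf := by
    intro h
    apply h0
    rw [← hrel, h, hsinf m hm, habs]
  have hsmul_ne : ∀ (k : ℕ) (a : M), a ≠ inf → k • a ≠ inf := by
    intro k a ha
    induction k with
    | zero => rw [zero_smul]; exact h0
    | succ k ih => rw [succ_nsmul]; exact hadd _ _ ih ha
  have hgen' : ∀ i j : ℕ, i • x + j • y ≠ inf := fun i j =>
    hadd _ _ (hsmul_ne i x hx) (hsmul_ne j y hy)
  -- no pure relation on x
  have hnorel_x : ∀ r : ℕ, 1 ≤ r → r • x ≠ 0 := by
    intro r hr h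
    have hrel' : (r + n) • x + m • y = 0 := by
      rw [add_nsmul, add_assoc, hrel, add_zero, h]
    obtain ⟨l, hl, h1, h2⟩ := hminrel (r + n) m (by omega) hm hrel'
    have : 1 * m = l * m := by rw [one_mul]; exact h2
    have hl1 : 1 = l := Nat.eq_of_mul_eq_mul_right hm this
    subst hl1
    omega
  have hnorel_y : ∀ s : ℕ, 1 ≤ s → s • y ≠ 0 := by
    intro s hs h
    have hrel' : n • x + (s + m) • y = 0 := by
      rw [add_nsmul, h, zero_add, hrel]
    obtain ⟨l, hl, h1, h2⟩ := hminrel n (s + m) hn (by omega) hrel'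
    have : 1 * n = l * n := by rw [one_mul]; exact h1
    have hl1 : 1 = l := Nat.eq_of_mul_eq_mul_right hn this
    subst hl1
    omega
  constructor
  · -- torsion-free → gcd = 1
    intro htf
    set d := Nat.gcd n m with hd
    have hd1 : 1 ≤ d := Nat.gcd_pos_of_pos_left m hn
    obtain ⟨n', hn'⟩ := Nat.gcd_dvd_left n m
    obtain ⟨m', hm'⟩ := Nat.gcd_dvd_right n m
    have hn'1 : 1 ≤ n' := by
      rcases Nat.eq_zero_or_pos n' with h | h
      · rw [h, mul_zero] at hn'; omega
      · exact h
    have hm'1 : 1 ≤ m' := by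
      rcases Nat.eq_zero_or_pos m' with h | h
      · rw [h, mul_zero] at hm'; omega
      · exact h
    have hdc : d • (n' • x + m' • y) = d • (0 : M) := by
      rw [smul_add, ← mul_smul, ← mul_smul, ← hn', ← hm', hrel, smul_zero]
    have hc0 : n' • x + m' • y = 0 :=
      htf d hd1 _ 0 (hgen' n' m') h0 hdc
    obtain ⟨l, hl, h1, h2⟩ := hminrel n' m' hn'1 hm'1 hc0
    have : (d * l) * n = 1 * n := by
      rw [one_mul, mul_assoc, ← h1, ← hn']
    have hdl : d * l = 1 := Nat.eq_of_mul_eq_mul_right hn this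
    have : d ≤ 1 := Nat.le_of_dvd one_pos ⟨l, hdl.symm⟩
    omega
  · -- gcd = 1 → torsion-free
    intro hg k hk a b ha hb hkab
    obtain ⟨b', hb'⟩ := hgroup b hb
    have hb'ne : b' ≠ inf := by
      intro h
      rw [h, habs] at hb'
      exact h0 hb'.symm
    have hcne : a + b' ≠ inf := hadd a b' ha hb'ne
    have hkc : k • (a + b') = 0 := by
      rw [smul_add, hkab, ← smul_add, hb', smul_zero]
    -- show a + b' = 0
    have hc0 : a + b' = 0 := by
      rcases hgen (a + b') with h | ⟨i, j, hij⟩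
      · exact absurd h hcne
      · rw [hij, smul_add, ← mul_smul, ← mul_smul] at hkc
        rcases Nat.eq_zero_or_pos i with hi | hi
        · rcases Nat.eq_zero_or_pos j with hj | hj
          · rw [hij, hi, hj, zero_smul, zero_smul, add_zero]
          · exfalso
            rw [hi, mul_zero, zero_smul, zero_add] at hkc
            exact hnorel_y (k * j) (Nat.mul_pos hk hj) hkc
        · rcases Nat.eq_zero_or_pos j with hj | hj
          · exfalso
            rw [hj, mul_zero, zero_smul, add_zero] at hkc
            exact hnorel_x (k * i) (Nat.mul_pos hk hi) hkc
          · obtain ⟨l, hl, h1, h2⟩ :=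
              hminrel (k * i) (k * j) (Nat.mul_pos hk hi) (Nat.mul_pos hk hj) hkc
            have hkdl : k ∣ l := by
              have : k ∣ Nat.gcd (l * n) (l * m) :=
                Nat.dvd_gcd ⟨i, h1.symm⟩ ⟨j, h2.symm⟩
              rwa [Nat.gcd_mul_left, hg, mul_one] at this
            obtain ⟨t, rfl⟩ := hkdl
            have hi' : i = t * n := by
              have : k * i = k * (t * n) := by rw [h1]; ring
              exact Nat.eq_of_mul_eq_mul_left hk this
            have hj' : j = t * m := by
              have : k * j = k * (t * m) := by rw [h2]; ring
              exact Nat.eq_of_mul_eq_mul_left hk this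
            rw [hij, hi', hj', mul_smul, mul_smul, ← smul_add, hrel, smul_zero]
    have : b = a := by
      rw [← zero_add b, ← hc0, add_assoc, add_comm b', hb', add_zero]
    exact this.symm
end

section
/- Let M be an infinite two-generated commutative binoid group with generators x, y and minimal relation nx + my = 0 where gcd(n, m) = 1. Then M is isomorphic to ℤ^∞, via the map sending x to m and y to -n. -/
/-- An infinite two-generated binoid group with generators `x`, `y` and minimal relation
`n • x + m • y = 0`, `gcd(n, m) = 1`, is isomorphic to `ℤ^∞` via `x ↦ m`, `y ↦ -n`. -/
theorem stmt_8 {M : Type*} [AddCommMonoid M] (inf : M)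
    (habs : ∀ a : M, a + inf = inf) (x y : M)
    (hgen : ∀ a : M, a = inf ∨ ∃ i j : ℕ, a = i • x + j • y)
    (hgroup : ∀ a : M, a ≠ inf → ∃ b : M, a + b = 0)
    (hinfinite : Infinite M)
    (n m : ℕ) (hn : 1 ≤ n) (hm : 1 ≤ m) (hrel : n • x + m • y = 0)
    (hminrel : ∀ r s : ℕ, 1 ≤ r → 1 ≤ s → r • x + s • y = 0 →
      ∃ l : ℕ, 1 ≤ l ∧ r = l * n ∧ s = l * m)
    (hcop : Nat.gcd n m = 1) :
    ∃ e : M ≃+ WithTop ℤ, e inf = ⊤ ∧ e x = ((m : ℤ) : WithTop ℤ) ∧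
      e y = ((-(n : ℤ) : ℤ) : WithTop ℤ) := by
  classical
  haveI := hinfinite
  -- basic: inf ≠ 0
  have hinf0 : (0 : M) ≠ inf := by
    intro h
    have hall : ∀ a : M, a = inf := fun a => by rw [← add_zero a, h, habs]
    obtain ⟨a, b, hab⟩ := exists_pair_ne M
    exact hab ((hall a).trans (hall b).symm)
  -- explicit inverses of x and y
  have hxinv : x + ((n - 1) • x + m • y) = 0 := by
    have h1 : n • x = x + (n - 1) • x := by
      conv_lhs => rw [show n = 1 + (n - 1) by omega]
      rw [add_smul, one_smul]
    rw [← add_assoc, ← h1, hrel]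
  have hyinv : y + (n • x + (m - 1) • y) = 0 := by
    have h1 : m • y = y + (m - 1) • y := by
      conv_lhs => rw [show m = 1 + (m - 1) by omega]
      rw [add_smul, one_smul]
    rw [add_left_comm, ← h1, hrel]
  -- combinations have inverses, hence are not inf
  have hcombinv : ∀ i j : ℕ,
      (i • x + j • y) + (i • ((n - 1) • x + m • y) + j • (n • x + (m - 1) • y)) = 0 := by
    intro i j
    rw [add_add_add_comm, ← smul_add, ← smul_add, hxinv, hyinv, smul_zero, smul_zero, add_zero]
  have hcombne : ∀ i j : ℕ, i • x + j • y ≠ inf := by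
    intro i j h
    have hc := hcombinv i j
    rw [h, add_comm, habs] at hc
    exact hinf0 hc.symm
  -- finiteness contradiction
  have hfin : ∀ p q : ℕ, 1 ≤ p → 1 ≤ q → p • x = 0 → q • y = 0 → False := by
    intro p q hp hq hpx hqy
    have hsur : Function.Surjective (fun ab : Option (Fin p × Fin q) =>
        ab.elim inf (fun ab => (ab.1 : ℕ) • x + (ab.2 : ℕ) • y)) := by
      intro a
      rcases hgen a with h | ⟨i, j, rfl⟩
      · exact ⟨none, h.symm⟩
      · refine ⟨some (⟨i % p, Nat.mod_lt _ hp⟩, ⟨j % q, Nat.mod_lt _ hq⟩), ?_⟩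
        have hxr : (i % p) • x = i • x := by
          conv_rhs => rw [← Nat.mod_add_div i p]
          rw [add_smul, mul_comm, mul_smul, hpx, smul_zero, add_zero]
        have hyr : (j % q) • y = j • y := by
          conv_rhs => rw [← Nat.mod_add_div j q]
          rw [add_smul, mul_comm, mul_smul, hqy, smul_zero, add_zero]
        simp only [Option.elim]
        rw [hxr, hyr]
    have : Finite M := Finite.of_surjective _ hsur
    exact not_finite M
  have hXne : ∀ r : ℕ, 1 ≤ r → r • x = 0 → False := by
    intro r hr hrx
    have h1 : (r * n) • x = 0 := by rw [mul_comm, mul_smul, hrx, smul_zero]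
    have h2 : (r * n) • x + (r * m) • y = 0 := by
      rw [mul_smul, mul_smul, ← smul_add, hrel, smul_zero]
    rw [h1, zero_add] at h2
    exact hfin r (r * m) hr (Nat.mul_pos hr hm) hrx h2
  have hYne : ∀ s : ℕ, 1 ≤ s → s • y = 0 → False := by
    intro s hs hsy
    have h1 : (s * m) • y = 0 := by rw [mul_comm, mul_smul, hsy, smul_zero]
    have h2 : (s * n) • x + (s * m) • y = 0 := by
      rw [mul_smul, mul_smul, ← smul_add, hrel, smul_zero]
    rw [h1, add_zero] at h2
    exact hfin (s * n) s (Nat.mul_pos hs hn) hs h2 hsy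
  -- every relation gives r * m = s * n
  have hkey : ∀ r s : ℕ, r • x + s • y = 0 → r * m = s * n := by
    intro r s h
    rcases Nat.eq_zero_or_pos r with hr | hr
    · rcases Nat.eq_zero_or_pos s with hs | hs
      · subst hr; subst hs; simp
      · subst hr
        rw [zero_smul, zero_add] at h
        exact (hYne s hs h).elim
    · rcases Nat.eq_zero_or_pos s with hs | hs
      · subst hs
        rw [zero_smul, add_zero] at h
        exact (hXne r hr h).elim
      · obtain ⟨l, _, hr', hs'⟩ := hminrel r s hr hs h
        subst hr'; subst hs'; ring
  -- well-definedness
  have hK : ∀ i j i' j' : ℕ, i • x + j • y = i' • x + j' • y →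
      (i : ℤ) * m - j * n = (i' : ℤ) * m - j' * n := by
    intro i j i' j' h
    have h1 : (i • x + j • y) + (i' • ((n - 1) • x + m • y) + j' • (n • x + (m - 1) • y)) = 0 := by
      rw [h]; exact hcombinv i' j'
    have h2 : (i • x + j • y) + (i' • ((n - 1) • x + m • y) + j' • (n • x + (m - 1) • y))
        = (i + i' * (n - 1) + j' * n) • x + (j + i' * m + j' * (m - 1)) • y := by
      simp only [smul_add, ← mul_smul, add_smul]
      abel
    rw [h2] at h1
    have h3 := hkey _ _ h1
    have h4 : ((i + i' * (n - 1) + j' * n) * m : ℤ) = ((j + i' * m + j' * (m - 1)) * n : ℤ) := by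
      exact_mod_cast congrArg (Nat.cast : ℕ → ℤ) h3
    linear_combination h4
  -- shift lemma and converse
  have hshift : ∀ i' j' l : ℕ, (i' + l * n) • x + (j' + l * m) • y = i' • x + j' • y := by
    intro i' j' l
    have h0 : (l * n) • x + (l * m) • y = 0 := by
      rw [mul_smul, mul_smul, ← smul_add, hrel, smul_zero]
    rw [add_smul, add_smul, add_add_add_comm, h0, add_zero]
  have hK' : ∀ i j i' j' : ℕ, (i : ℤ) * m - j * n = (i' : ℤ) * m - j' * n →
      i • x + j • y = i' • x + j' • y := by
    intro i j i' j' h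
    have hmn : ((i : ℤ) - i') * m = ((j : ℤ) - j') * n := by linear_combination h
    have hcop' : IsCoprime (n : ℤ) (m : ℤ) := by
      rw [Int.isCoprime_iff_gcd_eq_one, Int.gcd_natCast_natCast, hcop]
    have hnd : (n : ℤ) ∣ ((i : ℤ) - i') :=
      hcop'.dvd_of_dvd_mul_right ⟨(j : ℤ) - j', by linear_combination hmn⟩
    obtain ⟨t, ht⟩ := hnd
    have hn0 : (n : ℤ) ≠ 0 := by positivity
    have htm : t * m = (j : ℤ) - j' :=
      mul_left_cancel₀ hn0 (by linear_combination hmn - (m : ℤ) * ht)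
    rcases le_or_gt 0 t with htpos | htneg
    · have hi : i = i' + t.toNat * n := by
        have : (i : ℤ) = (i' : ℤ) + (t.toNat : ℤ) * n := by
          rw [Int.toNat_of_nonneg htpos]; linarith [ht]
        exact_mod_cast this
      have hj : j = j' + t.toNat * m := by
        have : (j : ℤ) = (j' : ℤ) + (t.toNat : ℤ) * m := by
          rw [Int.toNat_of_nonneg htpos]; linarith [htm]
        exact_mod_cast this
      rw [hi, hj, hshift]
    · have htpos' : 0 ≤ -t := by omega
      have hi : i' = i + (-t).toNat * n := by
        have : (i' : ℤ) = (i : ℤ) + ((-t).toNat : ℤ) * n := by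
          rw [Int.toNat_of_nonneg htpos']; linarith [ht]
        exact_mod_cast this
      have hj : j' = j + (-t).toNat * m := by
        have : (j' : ℤ) = (j : ℤ) + ((-t).toNat : ℤ) * m := by
          rw [Int.toNat_of_nonneg htpos']; linarith [htm]
        exact_mod_cast this
      rw [hi, hj, hshift]
  -- choice of representatives
  have hrepr : ∀ a : M, ∃ ij : ℕ × ℕ, a ≠ inf → a = ij.1 • x + ij.2 • y := by
    intro a
    rcases hgen a with h | ⟨i, j, h⟩
    · exact ⟨(0, 0), fun ha => absurd h ha⟩
    · exact ⟨(i, j), fun _ => h⟩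
  choose ρ hρ using hrepr
  set φ : M → WithTop ℤ := fun a =>
    if a = inf then ⊤
    else ((((ρ a).1 : ℤ) * m - ((ρ a).2 : ℤ) * n : ℤ) : WithTop ℤ) with hφdef
  have hφinf : φ inf = ⊤ := by simp [hφdef]
  have hφ : ∀ i j : ℕ, φ (i • x + j • y) = (((i : ℤ) * m - (j : ℤ) * n : ℤ) : WithTop ℤ) := by
    intro i j
    have hne := hcombne i j
    rw [hφdef]
    simp only [if_neg hne]
    exact congrArg (fun z : ℤ => (z : WithTop ℤ)) (hK _ _ _ _ (hρ _ hne).symm)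
  -- φ is an additive monoid hom
  have hmap0 : φ 0 = 0 := by
    have h0 : (0 : M) = (0 : ℕ) • x + (0 : ℕ) • y := by simp
    rw [h0, hφ]; norm_num
  have hmapadd : ∀ a b : M, φ (a + b) = φ a + φ b := by
    intro a b
    rcases eq_or_ne a inf with ha | ha
    · subst ha
      rw [add_comm, habs, hφinf]
      simp
    rcases eq_or_ne b inf with hb | hb
    · subst hb
      rw [habs, hφinf]
      simp
    obtain ⟨i, j, hij⟩ := (hgen a).resolve_left ha
    obtain ⟨i', j', hij'⟩ := (hgen b).resolve_left hb
    subst hij; subst hij'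
    have hsum : (i • x + j • y) + (i' • x + j' • y) = (i + i') • x + (j + j') • y := by
      rw [add_smul, add_smul]; abel
    rw [hsum, hφ, hφ, hφ, ← WithTop.coe_add]
    congr 1
    push_cast
    ring
  have hinj : Function.Injective φ := by
    intro a b hab
    rcases eq_or_ne a inf with ha | ha <;> rcases eq_or_ne b inf with hb | hb
    · rw [ha, hb]
    · obtain ⟨i, j, hij⟩ := (hgen b).resolve_left hb
      rw [ha, hφinf, hij, hφ] at hab
      exact absurd hab.symm (WithTop.coe_ne_top)
    · obtain ⟨i, j, hij⟩ := (hgen a).resolve_left ha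
      rw [hb, hφinf, hij, hφ] at hab
      exact absurd hab (WithTop.coe_ne_top)
    · obtain ⟨i, j, hij⟩ := (hgen a).resolve_left ha
      obtain ⟨i', j', hij'⟩ := (hgen b).resolve_left hb
      rw [hij, hij', hφ, hφ] at hab
      rw [hij, hij']
      exact hK' _ _ _ _ (WithTop.coe_injective hab)
  have hsurj : Function.Surjective φ := by
    intro z
    induction z using WithTop.recTopCoe with
    | top => exact ⟨inf, hφinf⟩
    | coe z =>
      obtain ⟨a, b, hab⟩ : ∃ a b : ℤ, (n : ℤ) * a + (m : ℤ) * b = 1 := by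
        refine ⟨Nat.gcdA n m, Nat.gcdB n m, ?_⟩
        have h := Nat.gcd_eq_gcd_ab n m
        rw [hcop] at h
        exact_mod_cast h.symm
      set t : ℕ := (b * z).natAbs + (a * z).natAbs with htdef
      have hn' : (1 : ℤ) ≤ (n : ℤ) := by exact_mod_cast hn
      have hm' : (1 : ℤ) ≤ (m : ℤ) := by exact_mod_cast hm
      have ht1 : (-(b * z) : ℤ) ≤ ((b * z).natAbs : ℤ) := by
        rw [← Int.natAbs_neg]; exact Int.le_natAbs
      have ht2 : (a * z : ℤ) ≤ ((a * z).natAbs : ℤ) := Int.le_natAbs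
      have htn : ((t : ℤ)) * 1 ≤ (t : ℤ) * n :=
        mul_le_mul_of_nonneg_left hn' (by positivity)
      have htm2 : ((t : ℤ)) * 1 ≤ (t : ℤ) * m :=
        mul_le_mul_of_nonneg_left hm' (by positivity)
      have hip : (0 : ℤ) ≤ b * z + t * n := by
        have : ((b * z).natAbs : ℤ) ≤ (t : ℤ) := by
          rw [htdef]; push_cast; linarith [abs_nonneg (a * z)]
        linarith
      have hjp : (0 : ℤ) ≤ -(a * z) + t * m := by
        have : ((a * z).natAbs : ℤ) ≤ (t : ℤ) := by
          rw [htdef]; push_cast; linarith [abs_nonneg (b * z)]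
        linarith
      refine ⟨(b * z + t * n).toNat • x + (-(a * z) + t * m).toNat • y, ?_⟩
      rw [hφ]
      congr 1
      rw [Int.toNat_of_nonneg hip, Int.toNat_of_nonneg hjp]
      linear_combination z * hab
  -- assemble the AddEquiv
  let f : M →+ WithTop ℤ := ⟨⟨φ, hmap0⟩, hmapadd⟩
  have hfb : Function.Bijective f := ⟨hinj, hsurj⟩
  refine ⟨AddEquiv.ofBijective f hfb, ?_, ?_, ?_⟩
  · show φ inf = ⊤
    exact hφinf
  · show φ x = ((m : ℤ) : WithTop ℤ)
    have hx1 : x = (1 : ℕ) • x + (0 : ℕ) • y := by simp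
    rw [hx1, hφ]
    norm_num
  · show φ y = ((-(n : ℤ) : ℤ) : WithTop ℤ)
    have hy1 : y = (0 : ℕ) • x + (1 : ℕ) • y := by simp
    rw [hy1, hφ]
    norm_num
end

section
/- Let M be an infinite two-generated commutative binoid group with generators x, y and minimal relation nx + my = 0 where d = gcd(n, m) ≥ 2. Then M is isomorphic to (ℤ × ℤ/dℤ)^∞; explicitly, writing n = ñd, m = m̃d and choosing r, s ∈ ℤ with sm̃ + rñ = 1, the map ix + jy ↦ (im̃ - jñ, ir + js mod d) is a group isomorphism from M \ {∞} to ℤ × ℤ/dℤ. -/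
/-- An infinite two-generated binoid group with generators `x`, `y` and minimal relation
`n • x + m • y = 0`, where `d = gcd(n, m) ≥ 2`, `n = ñd`, `m = m̃d` and `s·m̃ + r·ñ = 1`,
is isomorphic to `(ℤ × ℤ/dℤ)^∞` via `i • x + j • y ↦ (i·m̃ - j·ñ, i·r + j·s mod d)`. -/
theorem stmt_9 {M : Type*} [AddCommMonoid M] (inf : M)
    (habs : ∀ a : M, a + inf = inf) (x y : M)
    (hgen : ∀ a : M, a = inf ∨ ∃ i j : ℕ, a = i • x + j • y)
    (hgroup : ∀ a : M, a ≠ inf → ∃ b : M, a + b = 0)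
    (hinfinite : Infinite M)
    (n m d nt mt : ℕ) (r s : ℤ)
    (hn : 1 ≤ n) (hm : 1 ≤ m) (hrel : n • x + m • y = 0)
    (hminrel : ∀ r' s' : ℕ, 1 ≤ r' → 1 ≤ s' → r' • x + s' • y = 0 →
      ∃ l : ℕ, 1 ≤ l ∧ r' = l * n ∧ s' = l * m)
    (hd : d = Nat.gcd n m) (hd2 : 2 ≤ d)
    (hnt : n = nt * d) (hmt : m = mt * d)
    (hbez : s * (mt : ℤ) + r * (nt : ℤ) = 1) :
    ∃ e : M ≃+ WithTop (ℤ × ZMod d), e inf = ⊤ ∧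
      ∀ i j : ℕ, e (i • x + j • y) =
        ((((i : ℤ) * (mt : ℤ) - (j : ℤ) * (nt : ℤ),
          (((i : ℤ) * r + (j : ℤ) * s : ℤ) : ZMod d)) : ℤ × ZMod d) : WithTop (ℤ × ZMod d)) := by
  classical
  haveI : NeZero d := ⟨by omega⟩
  -- basic facts about `inf`
  have hinf0 : ∀ a : M, inf + a = inf := fun a => by rw [add_comm]; exact habs a
  have h0 : (0 : M) ≠ inf := by
    intro h
    have hall : ∀ a : M, a = inf := fun a => by rw [← add_zero a, h, habs]
    obtain ⟨a, b, hab⟩ := exists_pair_ne M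
    exact hab ((hall a).trans (hall b).symm)
  have hxg : x ≠ inf := by
    intro hx
    obtain ⟨n', rfl⟩ : ∃ n', n = n' + 1 := ⟨n - 1, by omega⟩
    apply h0
    rw [← hrel, hx, succ_nsmul, habs, hinf0]
  have hyg : y ≠ inf := by
    intro hy
    obtain ⟨m', rfl⟩ : ∃ m', m = m' + 1 := ⟨m - 1, by omega⟩
    apply h0
    rw [← hrel, hy, succ_nsmul, habs, habs]
  have haddne : ∀ a b : M, a ≠ inf → b ≠ inf → a + b ≠ inf := by
    intro a b ha hb hab
    obtain ⟨a', ha'⟩ := hgroup a ha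
    obtain ⟨b', hb'⟩ := hgroup b hb
    have h2 : (a + b) + (a' + b') = 0 := by rw [add_add_add_comm, ha', hb', add_zero]
    rw [hab, hinf0] at h2
    exact h0 h2.symm
  have hnegne : ∀ (a : M) (ha : a ≠ inf), Classical.choose (hgroup a ha) ≠ inf := by
    intro a ha h
    have hs := Classical.choose_spec (hgroup a ha)
    rw [h, habs] at hs
    exact h0 hs.symm
  -- the group of non-infinity elements
  letI : Zero {a : M // a ≠ inf} := ⟨⟨0, h0⟩⟩
  letI : Add {a : M // a ≠ inf} := ⟨fun a b => ⟨a.1 + b.1, haddne _ _ a.2 b.2⟩⟩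
  letI : Neg {a : M // a ≠ inf} :=
    ⟨fun a => ⟨Classical.choose (hgroup a.1 a.2), hnegne a.1 a.2⟩⟩
  letI instG : AddCommGroup {a : M // a ≠ inf} :=
    { add_assoc := fun a b c => Subtype.ext (add_assoc a.1 b.1 c.1)
      zero_add := fun a => Subtype.ext (zero_add a.1)
      add_zero := fun a => Subtype.ext (add_zero a.1)
      add_comm := fun a b => Subtype.ext (add_comm a.1 b.1)
      neg_add_cancel := fun a => Subtype.ext (by
        show Classical.choose (hgroup a.1 a.2) + a.1 = 0
        rw [add_comm]; exact Classical.choose_spec (hgroup a.1 a.2))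
      nsmul := nsmulRec
      zsmul := zsmulRec }
  let ι : {a : M // a ≠ inf} →+ M :=
    { toFun := Subtype.val, map_zero' := rfl, map_add' := fun _ _ => rfl }
  set X : {a : M // a ≠ inf} := ⟨x, hxg⟩ with hX
  set Y : {a : M // a ≠ inf} := ⟨y, hyg⟩ with hY
  have hval : ∀ i j : ℕ,
      (((i : ℤ) • X + (j : ℤ) • Y : {a : M // a ≠ inf}) : M) = i • x + j • y := by
    intro i j
    rw [natCast_zsmul, natCast_zsmul]
    show ι (i • X + j • Y) = _
    rw [map_add, map_nsmul, map_nsmul]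
    rfl
  have hrelG : (n : ℤ) • X + (m : ℤ) • Y = 0 :=
    Subtype.val_injective ((hval n m).trans hrel)
  -- kernel lemma
  have hker : ∀ P Q : ℤ, P • X + Q • Y = 0 → ∃ k : ℤ, P = k * n ∧ Q = k * m := by
    intro P Q hPQ
    set K : ℕ := P.natAbs + Q.natAbs + 1 with hK
    have hn' : (1 : ℤ) ≤ n := by exact_mod_cast hn
    have hm' : (1 : ℤ) ≤ m := by exact_mod_cast hm
    have hKn : (K : ℤ) ≤ K * n := le_mul_of_one_le_right (by positivity) hn'
    have hKm : (K : ℤ) ≤ K * m := le_mul_of_one_le_right (by positivity) hm'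
    have hPabs : -(P.natAbs : ℤ) ≤ P := by
      rw [← Int.abs_eq_natAbs]; exact neg_abs_le P
    have hQabs : -(Q.natAbs : ℤ) ≤ Q := by
      rw [← Int.abs_eq_natAbs]; exact neg_abs_le Q
    have hKcast : (K : ℤ) = P.natAbs + Q.natAbs + 1 := by push_cast [hK]; ring
    have hPK : 1 ≤ P + K * n := by nlinarith [(Nat.cast_nonneg P.natAbs : (0:ℤ) ≤ P.natAbs), (Nat.cast_nonneg Q.natAbs : (0:ℤ) ≤ Q.natAbs)]
    have hQK : 1 ≤ Q + K * m := by nlinarith [(Nat.cast_nonneg P.natAbs : (0:ℤ) ≤ P.natAbs), (Nat.cast_nonneg Q.natAbs : (0:ℤ) ≤ Q.natAbs)]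
    set p' : ℕ := (P + K * n).toNat with hp'
    set q' : ℕ := (Q + K * m).toNat with hq'
    have hp'c : (p' : ℤ) = P + K * n := Int.toNat_of_nonneg (by omega)
    have hq'c : (q' : ℤ) = Q + K * m := Int.toNat_of_nonneg (by omega)
    have hG : (p' : ℤ) • X + (q' : ℤ) • Y = 0 := by
      rw [hp'c, hq'c]
      have hexp : (P + (K : ℤ) * n) • X + (Q + (K : ℤ) * m) • Y
          = (P • X + Q • Y) + (K : ℤ) • ((n : ℤ) • X + (m : ℤ) • Y) := by module
      rw [hexp, hPQ, hrelG, smul_zero, add_zero]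
    have hM : p' • x + q' • y = 0 := (hval p' q').symm.trans (congrArg Subtype.val hG)
    have hp1 : 1 ≤ p' := by omega
    have hq1 : 1 ≤ q' := by omega
    obtain ⟨l, hl1, hlp, hlq⟩ := hminrel p' q' hp1 hq1 hM
    have hlp' : (p' : ℤ) = (l : ℤ) * n := by exact_mod_cast hlp
    have hlq' : (q' : ℤ) = (l : ℤ) * m := by exact_mod_cast hlq
    exact ⟨(l : ℤ) - K, by linear_combination hlp' - hp'c, by linear_combination hlq' - hq'c⟩
  -- building blocks of the isomorphism
  have hnZ : (n : ℤ) = (nt : ℤ) * d := by exact_mod_cast hnt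
  have hmZ : (m : ℤ) = (mt : ℤ) * d := by exact_mod_cast hmt
  let f1 : ℤ →+ {a : M // a ≠ inf} := zmultiplesHom _ (s • X + (-r) • Y)
  let f2 : ℤ →+ {a : M // a ≠ inf} := zmultiplesHom _ ((nt : ℤ) • X + (mt : ℤ) • Y)
  have hf2d : f2 (d : ℤ) = 0 := by
    show (d : ℤ) • ((nt : ℤ) • X + (mt : ℤ) • Y) = 0
    have hexp : (d : ℤ) • ((nt : ℤ) • X + (mt : ℤ) • Y)
        = ((nt : ℤ) * d) • X + ((mt : ℤ) * d) • Y := by module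
    rw [hexp, ← hnZ, ← hmZ, hrelG]
  let Θ : ℤ × ZMod d →+ {a : M // a ≠ inf} :=
    f1.coprod (ZMod.lift d ⟨f2, hf2d⟩)
  have key : ∀ i j : ℤ,
      Θ (i * mt - j * nt, ((i * r + j * s : ℤ) : ZMod d)) = i • X + j • Y := by
    intro i j
    show f1 (i * mt - j * nt) + ZMod.lift d ⟨f2, hf2d⟩ ((i * r + j * s : ℤ) : ZMod d)
        = i • X + j • Y
    rw [ZMod.lift_coe]
    show (i * mt - j * nt) • (s • X + (-r) • Y)
        + (i * r + j * s) • ((nt : ℤ) • X + (mt : ℤ) • Y) = i • X + j • Y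
    match_scalars
    · linear_combination i * hbez
    · linear_combination j * hbez
  -- bijectivity
  have hsurj : Function.Surjective Θ := by
    intro g
    rcases hgen g.1 with h | ⟨i, j, hij⟩
    · exact absurd h g.2
    · refine ⟨(⟨(i : ℤ) * mt - (j : ℤ) * nt,
        (((i : ℤ) * r + (j : ℤ) * s : ℤ) : ZMod d)⟩ : ℤ × ZMod d), ?_⟩
      rw [key]
      exact Subtype.val_injective ((hval i j).trans hij.symm)
  have hinj : Function.Injective Θ := by
    rw [injective_iff_map_eq_zero]
    rintro ⟨a, c⟩ hp
    set b : ℤ := (c.val : ℤ) with hb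
    have hcb : ((b : ℤ) : ZMod d) = c := by
      rw [hb, Int.cast_natCast]
      exact ZMod.natCast_rightInverse c
    have hTh : Θ (a, c) = (s * a + nt * b) • X + (-(r * a) + mt * b) • Y := by
      rw [← hcb]
      show f1 a + ZMod.lift d ⟨f2, hf2d⟩ ((b : ℤ) : ZMod d) = _
      rw [ZMod.lift_coe]
      show a • (s • X + (-r) • Y) + b • ((nt : ℤ) • X + (mt : ℤ) • Y) = _
      module
    rw [hTh] at hp
    obtain ⟨k, hk1, hk2⟩ := hker _ _ hp
    rw [hnZ] at hk1
    rw [hmZ] at hk2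
    have ha0 : a = 0 := by linear_combination (mt : ℤ) * hk1 - (nt : ℤ) * hk2 - a * hbez
    have hbk : b = k * d := by
      linear_combination s * hk2 + r * hk1 - (b - k * d) * hbez
    have hc0 : c = 0 := by
      rw [← hcb, hbk]
      push_cast
      simp [ZMod.natCast_self]
    rw [ha0, hc0]
    rfl
  let Θiso : (ℤ × ZMod d) ≃+ {a : M // a ≠ inf} := AddEquiv.ofBijective Θ ⟨hinj, hsurj⟩
  -- assembling the equivalence with `WithTop`
  refine ⟨{ toFun := fun a => if h : a = inf then (⊤ : WithTop (ℤ × ZMod d)) else ((Θiso.symm ⟨a, h⟩ : ℤ × ZMod d) : WithTop (ℤ × ZMod d))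
            invFun := fun w => WithTop.recTopCoe inf (fun p => (Θiso p).1) w
            left_inv := ?_
            right_inv := ?_
            map_add' := ?_ }, ?_, ?_⟩
  · intro a
    dsimp only
    by_cases h : a = inf
    · rw [dif_pos h]
      exact h.symm
    · rw [dif_neg h]
      show (Θiso (Θiso.symm ⟨a, h⟩)).1 = a
      rw [AddEquiv.apply_symm_apply]
  · intro w
    induction w using WithTop.recTopCoe with
    | top => exact dif_pos rfl
    | coe p =>
      show (if h : (Θiso p).1 = inf then (⊤ : WithTop (ℤ × ZMod d))
        else ((Θiso.symm ⟨(Θiso p).1, h⟩ : ℤ × ZMod d) : WithTop (ℤ × ZMod d))) = p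
      rw [dif_neg (Θiso p).2]
      have : (⟨(Θiso p).1, (Θiso p).2⟩ : {a : M // a ≠ inf}) = Θiso p := rfl
      rw [this, AddEquiv.symm_apply_apply]
  · intro a b
    show (if h : a + b = inf then (⊤ : WithTop (ℤ × ZMod d))
        else ((Θiso.symm ⟨a + b, h⟩ : ℤ × ZMod d) : WithTop (ℤ × ZMod d))) =
      (if h : a = inf then (⊤ : WithTop (ℤ × ZMod d))
        else ((Θiso.symm ⟨a, h⟩ : ℤ × ZMod d) : WithTop (ℤ × ZMod d))) +
      (if h : b = inf then (⊤ : WithTop (ℤ × ZMod d))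
        else ((Θiso.symm ⟨b, h⟩ : ℤ × ZMod d) : WithTop (ℤ × ZMod d)))
    by_cases ha : a = inf
    · have h1 : a + b = inf := by rw [ha, hinf0]
      rw [dif_pos h1, dif_pos ha, WithTop.top_add]
    · by_cases hb : b = inf
      · have h1 : a + b = inf := by rw [hb, habs]
        rw [dif_pos h1, dif_neg ha, dif_pos hb, WithTop.add_top]
      · have h1 : a + b ≠ inf := haddne a b ha hb
        rw [dif_neg h1, dif_neg ha, dif_neg hb, ← WithTop.coe_add]
        congr 1
        have h2 : (⟨a + b, h1⟩ : {a : M // a ≠ inf}) = ⟨a, ha⟩ + ⟨b, hb⟩ := rfl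
        rw [h2, map_add]
  · exact dif_pos rfl
  · intro i j
    have hne' : i • x + j • y ≠ inf := (hval i j) ▸ ((i : ℤ) • X + (j : ℤ) • Y).2
    show (if h : i • x + j • y = inf then (⊤ : WithTop (ℤ × ZMod d))
      else ((Θiso.symm ⟨i • x + j • y, h⟩ : ℤ × ZMod d) : WithTop (ℤ × ZMod d))) = _
    rw [dif_neg hne']
    congr 1
    rw [AddEquiv.symm_apply_eq]
    exact ((key (i : ℤ) (j : ℤ)).trans (Subtype.val_injective (hval i j))).symm
end

section
/- A two-generated commutative binoid group is isomorphic to exactly one of: ℤ^∞; (ℤ × ℤ/dℤ)^∞ for some d ≥ 2; or (ℤ/kℤ × ℤ/lℤ)^∞ for k, l ≥ 2 with gcd(k, l) ≥ 2. -/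
section BinoidAux

/-- WithTop congruence for AddEquiv. -/
def myWithTopCongr {G H : Type*} [AddCommMonoid G] [AddCommMonoid H] (f : G ≃+ H) :
    WithTop G ≃+ WithTop H where
  toFun := Option.map f
  invFun := Option.map f.symm
  left_inv o := by cases o using Option.casesOn <;> simp <;> rfl
  right_inv o := by cases o using Option.casesOn <;> simp <;> rfl
  map_add' a b := by
    induction a with
    | top => rfl
    | coe a =>
      induction b with
      | top => rfl
      | coe b =>
        show ((f (a + b) : WithTop H)) = (f a : WithTop H) + (f b : WithTop H)
        rw [← WithTop.coe_add, map_add]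

@[simp] lemma myWithTopCongr_top {G H : Type*} [AddCommMonoid G] [AddCommMonoid H] (f : G ≃+ H) :
    myWithTopCongr f ⊤ = ⊤ := rfl

@[simp] lemma myWithTopCongr_coe {G H : Type*} [AddCommMonoid G] [AddCommMonoid H] (f : G ≃+ H)
    (a : G) : myWithTopCongr f (a : WithTop G) = (f a : WithTop H) := rfl

/-- An addequiv from `WithTop ℤ` fixing `⊤` rules out torsion on the other side. -/
lemma no_torsion {H : Type*} [AddCommMonoid H] (F : WithTop ℤ ≃+ WithTop H) (hF : F ⊤ = ⊤)
    (t : H) (ht : t ≠ 0) (N : ℕ) (hN : N ≠ 0) (htN : N • t = 0) : False := by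
  have hsymm_top : F.symm ⊤ = ⊤ := by rw [← hF, AddEquiv.symm_apply_apply]
  have hzt : F.symm (t : WithTop H) ≠ ⊤ := by
    intro h
    exact WithTop.coe_ne_top (F.symm.injective (h.trans hsymm_top.symm))
  obtain ⟨n, hn⟩ := WithTop.ne_top_iff_exists.mp hzt
  have h1 : ((N • n : ℤ) : WithTop ℤ) = ((0 : ℤ) : WithTop ℤ) := by
    rw [WithTop.coe_nsmul, hn, ← map_nsmul, ← WithTop.coe_nsmul, htN]
    simp
  have hn0 : n = 0 := by
    rcases smul_eq_zero.mp (WithTop.coe_injective h1) with h | h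
    · exact absurd h hN
    · exact h
  apply ht
  rw [hn0] at hn
  have h2 : F.symm (t : WithTop H) = F.symm ((0 : H) : WithTop H) := by
    rw [← hn]; simp
  exact (WithTop.coe_injective (F.symm.injective h2))

/-- Classification of abelian groups generated by two elements. -/
lemma two_gen_classification {G : Type*} [AddCommGroup G] (x y : G)
    (hgen : ∀ g : G, ∃ n m : ℤ, g = n • x + m • y) :
    ∃ a b : ℕ, Nonempty (G ≃+ ZMod a × ZMod b) := by
  classical
  let φ : (Fin 2 → ℤ) →ₗ[ℤ] G :=
    { toFun := fun v => v 0 • x + v 1 • y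
      map_add' := fun u v => by simp only [Pi.add_apply, add_smul]; abel
      map_smul' := fun c v => by
        simp only [Pi.smul_apply, smul_eq_mul, mul_smul, smul_add, RingHom.id_apply] }
  have hφ : Function.Surjective φ := by
    intro g
    obtain ⟨n, m, rfl⟩ := hgen g
    exact ⟨![n, m], by simp [φ]⟩
  set K := LinearMap.ker φ with hK
  obtain ⟨nn, snf⟩ := K.smithNormalForm (Pi.basisFun ℤ (Fin 2))
  have ha : ∀ j, snf.a j ≠ 0 := by
    intro j h
    refine snf.bN.ne_zero j (Submodule.coe_eq_zero.mp ?_)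
    rw [snf.snf j, h, zero_smul]
  let d : Fin 2 → ℕ := fun i => if h : ∃ j, snf.f j = i then (snf.a h.choose).natAbs else 0
  have hd : ∀ j, d (snf.f j) = (snf.a j).natAbs := by
    intro j
    have hex : ∃ j', snf.f j' = snf.f j := ⟨j, rfl⟩
    have : hex.choose = j := snf.f.injective hex.choose_spec
    simp only [d, dif_pos hex, this]
  have hd0 : ∀ i, i ∉ Set.range snf.f → d i = 0 := by
    intro i hi
    have : ¬ ∃ j, snf.f j = i := by simpa [Set.mem_range] using hi
    simp only [d, dif_neg this]
  have key : ∀ v : Fin 2 → ℤ, v ∈ K ↔ ∀ i, ((d i : ℤ)) ∣ (snf.bM.repr v i) := by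
    intro v
    constructor
    · intro hv i
      by_cases h : i ∈ Set.range snf.f
      · obtain ⟨j, rfl⟩ := h
        have := snf.repr_apply_embedding_eq_repr_smul (m := ⟨v, hv⟩) (i := j)
        rw [hd j, Int.natAbs_dvd]
        rw [this, map_smul, Finsupp.smul_apply, smul_eq_mul]
        exact Dvd.intro _ rfl
      · rw [snf.repr_eq_zero_of_notMem_range ⟨v, hv⟩ h]
        exact dvd_zero _
    · intro hv
      have hc : ∀ j, ∃ c : ℤ, snf.bM.repr v (snf.f j) = snf.a j * c := by
        intro j
        have := hv (snf.f j)
        rw [hd j, Int.natAbs_dvd] at this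
        exact this
      choose c hcspec using hc
      have hzero : ∀ i, i ∉ Set.range snf.f → snf.bM.repr v i = 0 := by
        intro i hi
        have := hv i
        rw [hd0 i hi] at this
        exact zero_dvd_iff.mp (by exact_mod_cast this)
      have hv_eq : v = ((∑ j, c j • snf.bN j : K) : Fin 2 → ℤ) := by
        apply snf.bM.repr.injective
        ext i
        have coe_sum : ((∑ j, c j • snf.bN j : K) : Fin 2 → ℤ)
            = ∑ j, c j • (snf.bN j : Fin 2 → ℤ) := by
          push_cast
          rfl
        rw [coe_sum]
        rw [map_sum, Finsupp.finset_sum_apply]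
        have term : ∀ j, (snf.bM.repr (c j • (snf.bN j : Fin 2 → ℤ))) i
            = if snf.f j = i then c j * snf.a j else 0 := by
          intro j
          rw [map_smul, snf.snf j, map_smul, Module.Basis.repr_self, Finsupp.smul_apply,
            Finsupp.smul_apply, Finsupp.single_apply]
          split <;> simp [mul_comm]
        simp only [term]
        by_cases h : i ∈ Set.range snf.f
        · obtain ⟨j₀, rfl⟩ := h
          rw [Finset.sum_eq_single j₀]
          · rw [if_pos rfl, hcspec j₀, mul_comm]
          · intro j _ hj
            rw [if_neg (fun hh => hj (snf.f.injective hh))]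
          · intro h; exact absurd (Finset.mem_univ j₀) h
        · rw [hzero i h, Finset.sum_eq_zero]
          intro j _
          rw [if_neg (fun hh => h ⟨j, hh⟩)]
      rw [hv_eq]
      exact (∑ j, c j • snf.bN j : K).2
  let ψ : (Fin 2 → ℤ) →+ ZMod (d 0) × ZMod (d 1) :=
    { toFun := fun v => (((snf.bM.repr v 0 : ℤ) : ZMod (d 0)), ((snf.bM.repr v 1 : ℤ) : ZMod (d 1)))
      map_zero' := by simp
      map_add' := fun u v => by simp [Prod.ext_iff] }
  have hψ : Function.Surjective ψ := by
    rintro ⟨p, q⟩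
    obtain ⟨zp, rfl⟩ := ZMod.intCast_surjective p
    obtain ⟨zq, rfl⟩ := ZMod.intCast_surjective q
    refine ⟨snf.bM.repr.symm (Finsupp.single 0 zp + Finsupp.single 1 zq), ?_⟩
    simp only [ψ, AddMonoidHom.coe_mk, ZeroHom.coe_mk, LinearEquiv.apply_symm_apply]
    simp [Finsupp.single_apply, Prod.ext_iff]
  have hker : ψ.ker = K.toAddSubgroup := by
    ext v
    simp only [AddMonoidHom.mem_ker, Submodule.mem_toAddSubgroup]
    rw [key v, Prod.ext_iff]
    constructor
    · rintro ⟨h0, h1⟩ i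
      fin_cases i
      · exact (ZMod.intCast_zmod_eq_zero_iff_dvd _ _).mp h0
      · exact (ZMod.intCast_zmod_eq_zero_iff_dvd _ _).mp h1
    · intro h
      exact ⟨(ZMod.intCast_zmod_eq_zero_iff_dvd _ _).mpr (h 0),
        (ZMod.intCast_zmod_eq_zero_iff_dvd _ _).mpr (h 1)⟩
  refine ⟨d 0, d 1, ⟨?_⟩⟩
  have e1 : (Fin 2 → ℤ) ⧸ (AddMonoidHom.ker φ.toAddMonoidHom) ≃+ G :=
    QuotientAddGroup.quotientKerEquivOfSurjective φ.toAddMonoidHom hφ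
  have e2 : (Fin 2 → ℤ) ⧸ (AddMonoidHom.ker ψ) ≃+ ZMod (d 0) × ZMod (d 1) :=
    QuotientAddGroup.quotientKerEquivOfSurjective ψ hψ
  have hkk : AddMonoidHom.ker φ.toAddMonoidHom = AddMonoidHom.ker ψ := by
    rw [hker]
    ext v
    simp only [AddMonoidHom.mem_ker, Submodule.mem_toAddSubgroup, LinearMap.toAddMonoidHom_coe]
    exact LinearMap.mem_ker.symm
  exact (e1.symm.trans (QuotientAddGroup.quotientAddEquivOfEq hkk)).trans e2

/-- `ℤ × ℤ` is not spanned by two elements with natural number coefficients. -/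
lemma no_nat_span_two (u v : ℤ × ℤ) :
    ¬ (∀ g : ℤ × ℤ, ∃ n m : ℕ, g = n • u + m • v) := by
  intro hgen
  have coord : ∀ g : ℤ × ℤ, ∃ n m : ℤ, g.1 = n * u.1 + m * v.1 ∧ g.2 = n * u.2 + m * v.2
      ∧ 0 ≤ n ∧ 0 ≤ m := by
    intro g
    obtain ⟨n, m, hnm⟩ := hgen g
    refine ⟨n, m, ?_, ?_, Int.natCast_nonneg n, Int.natCast_nonneg m⟩
    · have := congrArg Prod.fst hnm
      simpa [nsmul_eq_mul] using this
    · have := congrArg Prod.snd hnm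
      simpa [nsmul_eq_mul] using this
  obtain ⟨n, m, r1, r2, hn0, hm0⟩ := coord (-(u + v))
  simp only [Prod.fst_neg, Prod.fst_add, Prod.snd_neg, Prod.snd_add] at r1 r2
  set p : ℤ := n + 1 with hp
  set q : ℤ := m + 1 with hq
  have hp1 : 1 ≤ p := by omega
  have hr1 : p * u.1 = -(q * v.1) := by linear_combination -r1
  have hr2 : p * u.2 = -(q * v.2) := by linear_combination -r2
  obtain ⟨α, β, h1, h2, -, -⟩ := coord (1, 0)
  obtain ⟨γ, δ, h3, h4, -, -⟩ := coord (0, 1)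
  simp only at h1 h2 h3 h4
  have e1 : p * 1 = (β * p - α * q) * v.1 := by linear_combination p * h1 + α * hr1
  have e2 : p * 0 = (β * p - α * q) * v.2 := by linear_combination p * h2 + α * hr2
  have e3 : p * 0 = (δ * p - γ * q) * v.1 := by linear_combination p * h3 + γ * hr1
  have e4 : p * 1 = (δ * p - γ * q) * v.2 := by linear_combination p * h4 + γ * hr2
  have hpp : p * p = 0 := by nlinarith [e1, e2, e3, e4]
  nlinarith [hpp, hp1]

variable {M : Type*} [AddCommMonoid M] (inf : M)

/-- The subtype of non-absorbing elements. -/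
def BinG (habs : ∀ a : M, a + inf = inf) (h0 : (0 : M) ≠ inf)
    (hgroup : ∀ a : M, a ≠ inf → ∃ b : M, a + b = 0) : Type _ := {a : M // a ≠ inf}

namespace BinG

lemma add_ne (h0 : (0 : M) ≠ inf) (habs : ∀ a : M, a + inf = inf)
    (hgroup : ∀ a : M, a ≠ inf → ∃ b : M, a + b = 0)
    {a b : M} (ha : a ≠ inf) (hb : b ≠ inf) : a + b ≠ inf := by
  intro hab
  obtain ⟨a', ha'⟩ := hgroup a ha
  obtain ⟨b', hb'⟩ := hgroup b hb
  apply h0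
  calc (0 : M) = (a + a') + (b + b') := by rw [ha', hb', add_zero]
  _ = (a + b) + (a' + b') := by abel
  _ = inf + (a' + b') := by rw [hab]
  _ = inf := by rw [add_comm, habs]

instance : Add (BinG inf habs h0 hgroup) :=
  ⟨fun a b => ⟨a.1 + b.1, add_ne inf h0 habs hgroup a.2 b.2⟩⟩

instance : Zero (BinG inf habs h0 hgroup) := ⟨⟨0, h0⟩⟩

noncomputable instance : Neg (BinG inf habs h0 hgroup) :=
  ⟨fun a => ⟨(hgroup a.1 a.2).choose, by
    intro h
    apply h0
    rw [← (hgroup a.1 a.2).choose_spec, h, habs]⟩⟩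

noncomputable instance instGroup : AddCommGroup (BinG inf habs h0 hgroup) where
  add_assoc a b c := Subtype.ext (add_assoc a.1 b.1 c.1)
  zero_add a := Subtype.ext (zero_add a.1)
  add_zero a := Subtype.ext (add_zero a.1)
  add_comm a b := Subtype.ext (add_comm a.1 b.1)
  nsmul := nsmulRec
  zsmul := zsmulRec
  neg_add_cancel a := by
    apply Subtype.ext
    show (hgroup a.1 a.2).choose + a.1 = 0
    rw [add_comm]
    exact (hgroup a.1 a.2).choose_spec

@[simp] lemma coe_add (a b : BinG inf habs h0 hgroup) : (a + b).1 = a.1 + b.1 := rfl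

@[simp] lemma coe_zero : ((0 : BinG inf habs h0 hgroup)).1 = 0 := rfl

@[simp] lemma coe_nsmul (n : ℕ) (a : BinG inf habs h0 hgroup) : (n • a).1 = n • a.1 := by
  induction n with
  | zero => rw [zero_nsmul, zero_nsmul]; rfl
  | succ k ih => rw [succ_nsmul, succ_nsmul, coe_add, ih]

end BinG

/-- The canonical equivalence of a binoid group with `G^∞`. -/
noncomputable def binEquiv (habs : ∀ a : M, a + inf = inf) (h0 : (0 : M) ≠ inf)
    (hgroup : ∀ a : M, a ≠ inf → ∃ b : M, a + b = 0) [DecidableEq M] :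
    M ≃+ WithTop (BinG inf habs h0 hgroup) where
  toFun a := if h : a = inf then ⊤ else WithTop.some (⟨a, h⟩ : BinG inf habs h0 hgroup)
  invFun o := o.elim inf (fun g => g.1)
  left_inv a := by
    dsimp only
    by_cases h : a = inf
    · rw [dif_pos h, h]
      rfl
    · rw [dif_neg h]
      rfl
  right_inv o := by
    induction o with
    | top =>
      show (if h : inf = inf then (⊤ : WithTop (BinG inf habs h0 hgroup)) else _) = ⊤
      rw [dif_pos rfl]
    | coe g =>
      show (if h : g.1 = inf then (⊤ : WithTop (BinG inf habs h0 hgroup)) else _) = _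
      rw [dif_neg g.2]
      rfl
  map_add' a b := by
    show ((if h : a + b = inf then ⊤ else WithTop.some (⟨a + b, h⟩ : BinG inf habs h0 hgroup)) :
        WithTop (BinG inf habs h0 hgroup)) =
      ((if h : a = inf then ⊤ else WithTop.some (⟨a, h⟩ : BinG inf habs h0 hgroup)) :
        WithTop (BinG inf habs h0 hgroup)) +
      ((if h : b = inf then ⊤ else WithTop.some (⟨b, h⟩ : BinG inf habs h0 hgroup)) :
        WithTop (BinG inf habs h0 hgroup))
    by_cases ha : a = inf
    · have hab : a + b = inf := by rw [ha, add_comm, habs]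
      rw [dif_pos ha, dif_pos hab]
      rfl
    · by_cases hb : b = inf
      · have hab : a + b = inf := by rw [hb, habs]
        rw [dif_pos hb, dif_pos hab]
        simp
      · have hab : a + b ≠ inf := BinG.add_ne inf h0 habs hgroup ha hb
        rw [dif_neg ha, dif_neg hb, dif_neg hab]
        rfl

lemma binEquiv_inf (habs : ∀ a : M, a + inf = inf) (h0 : (0 : M) ≠ inf)
    (hgroup : ∀ a : M, a ≠ inf → ∃ b : M, a + b = 0) [DecidableEq M] :
    binEquiv inf habs h0 hgroup inf = ⊤ := by
  show (if h : inf = inf then (⊤ : WithTop (BinG inf habs h0 hgroup)) else _) = ⊤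
  rw [dif_pos rfl]

end BinoidAux

section MainAux

lemma cyclic_gen {M : Type*} [AddCommMonoid M] (inf : M) (m : ℕ) (hm : m ≠ 0)
    (E : M ≃+ WithTop (ZMod m)) (hE : E inf = ⊤) :
    ∃ z : M, ∀ a : M, a = inf ∨ ∃ n : ℕ, a = n • z := by
  haveI : NeZero m := ⟨hm⟩
  refine ⟨E.symm ((1 : ZMod m) : WithTop (ZMod m)), fun a => ?_⟩
  by_cases ha : a = inf
  · exact Or.inl ha
  right
  have hna : E a ≠ ⊤ := fun h => ha (E.injective (h.trans hE.symm))
  obtain ⟨c, hc⟩ := WithTop.ne_top_iff_exists.mp hna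
  refine ⟨c.val, E.injective ?_⟩
  rw [← hc, map_nsmul, AddEquiv.apply_symm_apply, ← WithTop.coe_nsmul]
  rw [nsmul_eq_mul, mul_one]
  exact congrArg _ (ZMod.natCast_rightInverse c).symm

lemma span_transport {M : Type*} [AddCommMonoid M] (inf x y : M)
    (hgen : ∀ a : M, a = inf ∨ ∃ n m : ℕ, a = n • x + m • y)
    (hx : x ≠ inf) (hy : y ≠ inf) {H : Type*} [AddCommMonoid H]
    (E : M ≃+ WithTop H) (hE : E inf = ⊤) :
    ∃ u v : H, ∀ g : H, ∃ n m : ℕ, g = n • u + m • v := by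
  have hxt : E x ≠ ⊤ := fun h => hx (E.injective (h.trans hE.symm))
  have hyt : E y ≠ ⊤ := fun h => hy (E.injective (h.trans hE.symm))
  obtain ⟨u, hu⟩ := WithTop.ne_top_iff_exists.mp hxt
  obtain ⟨v, hv⟩ := WithTop.ne_top_iff_exists.mp hyt
  refine ⟨u, v, fun g => ?_⟩
  have hg : E.symm (g : WithTop H) ≠ inf := by
    intro h
    have : (g : WithTop H) = ⊤ := by
      rw [← hE, ← h, AddEquiv.apply_symm_apply]
    exact WithTop.coe_ne_top this
  rcases hgen (E.symm (g : WithTop H)) with h | ⟨n, m, h⟩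
  · exact absurd h hg
  refine ⟨n, m, ?_⟩
  apply WithTop.coe_injective
  have := congrArg E h
  rw [AddEquiv.apply_symm_apply, map_add, map_nsmul, map_nsmul, ← hu, ← hv,
    ← WithTop.coe_nsmul, ← WithTop.coe_nsmul, ← WithTop.coe_add] at this
  exact this

end MainAux

/-- A two-generated commutative binoid group is isomorphic to exactly one of: `ℤ^∞`,
`(ℤ × ℤ/dℤ)^∞` for some `d ≥ 2`, or `(ℤ/kℤ × ℤ/lℤ)^∞` for `k, l ≥ 2` with `gcd(k,l) ≥ 2`. -/
theorem stmt_10 {M : Type*} [AddCommMonoid M] (inf : M)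
    (habs : ∀ a : M, a + inf = inf) (x y : M)
    (hgen : ∀ a : M, a = inf ∨ ∃ n m : ℕ, a = n • x + m • y)
    (hnotone : ¬ ∃ z : M, ∀ a : M, a = inf ∨ ∃ n : ℕ, a = n • z)
    (hgroup : ∀ a : M, a ≠ inf → ∃ b : M, a + b = 0) :
    ((∃ e : M ≃+ WithTop ℤ, e inf = ⊤) ∨
      (∃ d : ℕ, 2 ≤ d ∧ ∃ e : M ≃+ WithTop (ℤ × ZMod d), e inf = ⊤) ∨
      (∃ k l : ℕ, 2 ≤ k ∧ 2 ≤ l ∧ 2 ≤ Nat.gcd k l ∧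
        ∃ e : M ≃+ WithTop (ZMod k × ZMod l), e inf = ⊤)) ∧
    ¬((∃ e : M ≃+ WithTop ℤ, e inf = ⊤) ∧
        (∃ d : ℕ, 2 ≤ d ∧ ∃ e : M ≃+ WithTop (ℤ × ZMod d), e inf = ⊤)) ∧
    ¬((∃ e : M ≃+ WithTop ℤ, e inf = ⊤) ∧
        (∃ k l : ℕ, 2 ≤ k ∧ 2 ≤ l ∧ 2 ≤ Nat.gcd k l ∧
          ∃ e : M ≃+ WithTop (ZMod k × ZMod l), e inf = ⊤)) ∧
    ¬((∃ d : ℕ, 2 ≤ d ∧ ∃ e : M ≃+ WithTop (ℤ × ZMod d), e inf = ⊤) ∧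
        (∃ k l : ℕ, 2 ≤ k ∧ 2 ≤ l ∧ 2 ≤ Nat.gcd k l ∧
          ∃ e : M ≃+ WithTop (ZMod k × ZMod l), e inf = ⊤)) := by
  classical
  refine ⟨?_, ?_, ?_, ?_⟩
  -- EXISTENCE
  · have h0 : (0 : M) ≠ inf := by
      intro h
      exact hnotone ⟨x, fun a => Or.inl (by rw [← add_zero a, h, habs])⟩
    have hinf_smul : ∀ (n : ℕ), n ≠ 0 → n • inf = inf := by
      intro n hn
      induction n with
      | zero => exact absurd rfl hn
      | succ k ih =>
        rcases Nat.eq_zero_or_pos k with hk | hk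
        · subst hk
          rw [one_nsmul]
        · rw [succ_nsmul, ih (by omega), habs]
    have hone_gen : ∀ w z : M, w = inf →
        (∀ a : M, a = inf ∨ ∃ n m : ℕ, a = n • w + m • z) → False := by
      intro w z hw hg
      apply hnotone
      refine ⟨z, fun a => ?_⟩
      rcases hg a with ha | ⟨n, m, ha⟩
      · exact Or.inl ha
      rcases Nat.eq_zero_or_pos n with hn | hn
      · subst hn
        right
        exact ⟨m, by simpa using ha⟩
      · left
        rw [ha, hw, hinf_smul n (by omega), add_comm, habs]
    have hx : x ≠ inf := fun h => hone_gen x y h hgen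
    have hy : y ≠ inf := fun h => hone_gen y x h
      (fun a => (hgen a).imp id (fun ⟨n, m, ha⟩ => ⟨m, n, by rw [ha, add_comm]⟩))
    set S := BinG inf habs h0 hgroup with hS
    let E₀ : M ≃+ WithTop S := binEquiv inf habs h0 hgroup
    have hE₀ : E₀ inf = ⊤ := binEquiv_inf inf habs h0 hgroup
    set x' : S := ⟨x, hx⟩ with hx'
    set y' : S := ⟨y, hy⟩ with hy'
    have hgenS : ∀ g : S, ∃ n m : ℤ, g = n • x' + m • y' := by
      intro g
      rcases hgen g.1 with h | ⟨n, m, h⟩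
      · exact absurd h g.2
      refine ⟨n, m, ?_⟩
      apply Subtype.ext
      rw [natCast_zsmul, natCast_zsmul, BinG.coe_add, BinG.coe_nsmul, BinG.coe_nsmul]
      exact h
    obtain ⟨a, b, ⟨π⟩⟩ := two_gen_classification x' y' hgenS
    set E : M ≃+ WithTop (ZMod a × ZMod b) := E₀.trans (myWithTopCongr π) with hEdef
    have hE : E inf = ⊤ := by
      rw [hEdef]
      simp [AddEquiv.trans_apply, hE₀]
    -- helper to conclude from a further group equiv
    have conclude : ∀ {H : Type} [AddCommMonoid H] (ρ : (ZMod a × ZMod b) ≃+ H),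
        ∃ e : M ≃+ WithTop H, e inf = ⊤ := by
      intro H _ ρ
      exact ⟨E.trans (myWithTopCongr ρ), by simp [AddEquiv.trans_apply, hE]⟩
    have cyccon : ∀ (m : ℕ), m ≠ 0 → ((ZMod a × ZMod b) ≃+ ZMod m) → False := by
      intro m hm ρ
      obtain ⟨e, he⟩ := conclude ρ
      exact hnotone (cyclic_gen inf m hm e he)
    rcases Nat.eq_zero_or_pos a with ha0 | hapos
    · subst ha0
      rcases Nat.eq_zero_or_pos b with hb0 | hbpos
      · subst hb0
        exfalso
        obtain ⟨e, he⟩ := conclude (AddEquiv.refl (ℤ × ℤ) : ZMod 0 × ZMod 0 ≃+ ℤ × ℤ)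
        obtain ⟨u, v, huv⟩ := span_transport inf x y hgen hx hy e he
        exact no_nat_span_two u v huv
      rcases Nat.lt_or_ge b 2 with hb1 | hb2
      · -- b = 1
        have hb : b = 1 := by omega
        subst hb
        left
        exact conclude ((AddEquiv.prodUnique : ZMod 0 × ZMod 1 ≃+ ZMod 0).trans
          (AddEquiv.refl ℤ : ZMod 0 ≃+ ℤ))
      · right; left
        exact ⟨b, hb2, conclude (AddEquiv.refl _ : ZMod 0 × ZMod b ≃+ ℤ × ZMod b)⟩
    rcases Nat.lt_or_ge a 2 with ha1 | ha2
    · -- a = 1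
      have ha : a = 1 := by omega
      subst ha
      rcases Nat.eq_zero_or_pos b with hb0 | hbpos
      · subst hb0
        left
        exact conclude ((AddEquiv.uniqueProd : ZMod 1 × ZMod 0 ≃+ ZMod 0).trans
          (AddEquiv.refl ℤ : ZMod 0 ≃+ ℤ))
      · exfalso
        exact cyccon b (by omega) (AddEquiv.uniqueProd : ZMod 1 × ZMod b ≃+ ZMod b)
    -- a ≥ 2
    rcases Nat.eq_zero_or_pos b with hb0 | hbpos
    · subst hb0
      right; left
      refine ⟨a, ha2, conclude ?_⟩
      exact (AddEquiv.prodComm : ZMod a × ZMod 0 ≃+ ZMod 0 × ZMod a).trans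
        (AddEquiv.prodCongr (AddEquiv.refl ℤ : ZMod 0 ≃+ ℤ) (AddEquiv.refl _))
    rcases Nat.lt_or_ge b 2 with hb1 | hb2
    · have hb : b = 1 := by omega
      subst hb
      exfalso
      exact cyccon a (by omega) (AddEquiv.prodUnique : ZMod a × ZMod 1 ≃+ ZMod a)
    rcases Nat.lt_or_ge (Nat.gcd a b) 2 with hg1 | hg2
    · exfalso
      have hcop : Nat.Coprime a b := by
        have hgz : Nat.gcd a b ≠ 0 := fun h => by
          have := Nat.eq_zero_of_gcd_eq_zero_left h
          omega
        unfold Nat.Coprime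
        omega
      exact cyccon (a * b) (by positivity)
        ((ZMod.chineseRemainder hcop).symm.toAddEquiv)
    · right; right
      exact ⟨a, b, ha2, hb2, hg2, conclude (AddEquiv.refl _)⟩
  -- EXCLUSIVITY 1 : ℤ vs ℤ × ZMod d
  · rintro ⟨⟨e₁, he₁⟩, d, hd, e₂, he₂⟩
    haveI : Fact (1 < d) := ⟨by omega⟩
    obtain ⟨u, hu⟩ := exists_ne (0 : ZMod d)
    have hF : (e₁.symm.trans e₂) ⊤ = ⊤ := by
      have h1 : e₁.symm ⊤ = inf := by rw [← he₁, AddEquiv.symm_apply_apply]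
      rw [AddEquiv.trans_apply, h1, he₂]
    refine no_torsion (e₁.symm.trans e₂) hF ((0 : ℤ), u) ?_ d (by omega) ?_
    · simp [Prod.ext_iff, hu]
    · have : d • u = 0 := by
        rw [nsmul_eq_mul, ZMod.natCast_self, zero_mul]
      simp [Prod.ext_iff, this]
  -- EXCLUSIVITY 2 : ℤ vs ZMod k × ZMod l
  · rintro ⟨⟨e₁, he₁⟩, k, l, hk, hl, -, e₂, he₂⟩
    haveI : Fact (1 < k) := ⟨by omega⟩
    obtain ⟨u, hu⟩ := exists_ne (0 : ZMod k)
    have hF : (e₁.symm.trans e₂) ⊤ = ⊤ := by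
      have h1 : e₁.symm ⊤ = inf := by rw [← he₁, AddEquiv.symm_apply_apply]
      rw [AddEquiv.trans_apply, h1, he₂]
    refine no_torsion (e₁.symm.trans e₂) hF (u, (0 : ZMod l)) ?_ k (by omega) ?_
    · simp [Prod.ext_iff, hu]
    · have : k • u = 0 := by
        rw [nsmul_eq_mul, ZMod.natCast_self, zero_mul]
      simp [Prod.ext_iff, this]
  -- EXCLUSIVITY 3 : infinite vs finite
  · rintro ⟨⟨d, hd, e₁, he₁⟩, k, l, hk, hl, -, e₂, he₂⟩
    haveI : NeZero k := ⟨by omega⟩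
    haveI : NeZero l := ⟨by omega⟩
    haveI : Finite (WithTop (ZMod k × ZMod l)) :=
      inferInstanceAs (Finite (Option (ZMod k × ZMod l)))
    haveI : Infinite (WithTop (ℤ × ZMod d)) :=
      inferInstanceAs (Infinite (Option (ℤ × ZMod d)))
    haveI : Finite (WithTop (ℤ × ZMod d)) :=
      Finite.of_equiv _ (e₁.symm.trans e₂).toEquiv.symm
    exact not_finite (WithTop (ℤ × ZMod d))
end

section
/- Consider the amalgamated smash product N = ℕ^∞ ∧_{ℕ^∞} ℕ^∞ where the two copies of ℕ^∞ are ℕ^∞-binoids via 1 ↦ k and 1 ↦ l respectively (k, l ≥ 2), i.e., N = (ℕ × ℕ)^∞ modulo the congruence generated by (k, 0) = (0, l). The binoid homomorphism ψ: N → ℕ^∞ given by (n, m) ↦ (nl + mk)/gcd(k,l) is injective if and only if gcd(k, l) = 1. In particular, N is torsion-free if and only if k and l are coprime. -/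
/-- The amalgamated smash product `ℕ^∞ ∧_{ℕ^∞} ℕ^∞` (structure maps `1 ↦ k`, `1 ↦ l`):
the quotient of `(ℕ × ℕ)^∞` by the congruence generated by `(k, 0) = (0, l)`. -/
def Nsmash (k l : ℕ) : Type :=
  (addConGen (fun a b : WithTop (ℕ × ℕ) =>
    a = (((k, 0) : ℕ × ℕ) : WithTop (ℕ × ℕ)) ∧ b = (((0, l) : ℕ × ℕ) : WithTop (ℕ × ℕ)))).Quotient

instance (k l : ℕ) : AddCommMonoid (Nsmash k l) :=
  inferInstanceAs (AddCommMonoid (addConGen (fun a b : WithTop (ℕ × ℕ) =>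
    a = (((k, 0) : ℕ × ℕ) : WithTop (ℕ × ℕ)) ∧
      b = (((0, l) : ℕ × ℕ) : WithTop (ℕ × ℕ)))).Quotient)

/-- The canonical projection `(ℕ × ℕ)^∞ → ℕ^∞ ∧_{ℕ^∞} ℕ^∞`. -/
def Nsmash.mk (k l : ℕ) (a : WithTop (ℕ × ℕ)) : Nsmash k l :=
  (addConGen (fun a b : WithTop (ℕ × ℕ) =>
    a = (((k, 0) : ℕ × ℕ) : WithTop (ℕ × ℕ)) ∧
      b = (((0, l) : ℕ × ℕ) : WithTop (ℕ × ℕ)))).mk' a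

namespace NsmashAux

/-- The defining congruence. -/
def C (k l : ℕ) : AddCon (WithTop (ℕ × ℕ)) :=
  addConGen (fun a b : WithTop (ℕ × ℕ) =>
    a = (((k, 0) : ℕ × ℕ) : WithTop (ℕ × ℕ)) ∧
      b = (((0, l) : ℕ × ℕ) : WithTop (ℕ × ℕ)))

lemma mk_eq_mk {k l : ℕ} {a b : WithTop (ℕ × ℕ)} :
    Nsmash.mk k l a = Nsmash.mk k l b ↔ C k l a b :=
  (C k l).eq

lemma mk_add (k l : ℕ) (a b : WithTop (ℕ × ℕ)) :
    Nsmash.mk k l (a + b) = Nsmash.mk k l a + Nsmash.mk k l b :=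
  map_add (C k l).mk' a b

lemma mk_nsmul (k l c : ℕ) (a : WithTop (ℕ × ℕ)) :
    Nsmash.mk k l (c • a) = c • Nsmash.mk k l a :=
  map_nsmul (C k l).mk' c a

lemma rep (a : WithTop (ℕ × ℕ)) :
    a = ⊤ ∨ ∃ n m : ℕ, a = (((n, m) : ℕ × ℕ) : WithTop (ℕ × ℕ)) := by
  induction a using WithTop.recTopCoe with
  | top => exact Or.inl rfl
  | coe p => exact Or.inr ⟨p.1, p.2, rfl⟩

/-- An explicit congruence containing the defining one. -/
def S (k l : ℕ) : AddCon (WithTop (ℕ × ℕ)) where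
  r a b := (a = ⊤ ∧ b = ⊤) ∨ ∃ (n m n' m' : ℕ) (t : ℤ),
      a = (((n, m) : ℕ × ℕ) : WithTop (ℕ × ℕ)) ∧ b = (((n', m') : ℕ × ℕ) : WithTop (ℕ × ℕ)) ∧
      (n' : ℤ) = (n : ℤ) - t * k ∧ (m' : ℤ) = (m : ℤ) + t * l
  iseqv := by
    refine ⟨fun a => ?_, fun {a b} h => ?_, fun {a b c} h1 h2 => ?_⟩
    · rcases a with _ | ⟨n, m⟩
      · exact Or.inl ⟨rfl, rfl⟩
      · exact Or.inr ⟨n, m, n, m, 0, rfl, rfl, by push_cast; ring, by push_cast; ring⟩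
    · rcases h with ⟨ha, hb⟩ | ⟨n, m, n', m', t, ha, hb, h1, h2⟩
      · exact Or.inl ⟨hb, ha⟩
      · exact Or.inr ⟨n', m', n, m, -t, hb, ha, by push_cast; linarith, by push_cast; linarith⟩
    · rcases h1 with ⟨ha, hb⟩ | ⟨n, m, n', m', t, ha, hb, e1, e2⟩
      · rcases h2 with ⟨hb2, hc⟩ | ⟨p, q, p', q', t', hb2, hc, f1, f2⟩
        · exact Or.inl ⟨ha, hc⟩
        · rw [hb] at hb2; exact absurd hb2.symm WithTop.coe_ne_top
      · rcases h2 with ⟨hb2, hc⟩ | ⟨p, q, p', q', t', hb2, hc, f1, f2⟩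
        · rw [hb] at hb2; exact absurd hb2 WithTop.coe_ne_top
        · rw [hb, WithTop.coe_inj, Prod.mk.injEq] at hb2
          obtain ⟨rfl, rfl⟩ := hb2
          exact Or.inr ⟨n, m, p', q', t + t', ha, hc, by push_cast at *; linarith,
            by push_cast at *; linarith⟩
  add' := by
    rintro a b c d (⟨rfl, rfl⟩ | ⟨n, m, n', m', t, rfl, rfl, e1, e2⟩)
        (⟨rfl, rfl⟩ | ⟨p, q, p', q', t', rfl, rfl, f1, f2⟩)
    · exact Or.inl ⟨rfl, rfl⟩
    · exact Or.inl ⟨WithTop.top_add _, WithTop.top_add _⟩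
    · exact Or.inl ⟨WithTop.add_top _, WithTop.add_top _⟩
    · refine Or.inr ⟨n + p, m + q, n' + p', m' + q', t + t', ?_, ?_, ?_, ?_⟩
      · rw [← WithTop.coe_add, Prod.mk_add_mk]
      · rw [← WithTop.coe_add, Prod.mk_add_mk]
      · push_cast; linarith
      · push_cast; linarith

lemma conGen_le_S (k l : ℕ) : C k l ≤ S k l := by
  refine AddCon.addConGen_le.2 ?_
  rintro x y ⟨rfl, rfl⟩
  exact Or.inr ⟨k, 0, 0, l, 1, rfl, rfl, by push_cast; ring, by push_cast; ring⟩

lemma mk_coe_ne_top (k l n m : ℕ) :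
    Nsmash.mk k l (((n, m) : ℕ × ℕ) : WithTop (ℕ × ℕ)) ≠ Nsmash.mk k l ⊤ := by
  intro h
  rcases conGen_le_S k l (mk_eq_mk.1 h) with ⟨ha, _⟩ | ⟨p, q, p', q', t, _, hb, _, _⟩
  · exact WithTop.coe_ne_top ha
  · exact WithTop.coe_ne_top hb.symm

lemma mk_ne_of (k l k' l' : ℕ) (hk'0 : 0 < k') (hk'lt : k' < k) :
    Nsmash.mk k l (((k', 0) : ℕ × ℕ) : WithTop (ℕ × ℕ)) ≠
      Nsmash.mk k l (((0, l') : ℕ × ℕ) : WithTop (ℕ × ℕ)) := by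
  intro h
  rcases conGen_le_S k l (mk_eq_mk.1 h) with ⟨ha, _⟩ | ⟨p, q, p', q', t, ha, hb, e1, e2⟩
  · exact WithTop.coe_ne_top ha
  · rw [WithTop.coe_inj, Prod.mk.injEq] at ha hb
    obtain ⟨rfl, rfl⟩ := ha
    obtain ⟨rfl, rfl⟩ := hb
    push_cast at e1 e2
    have hdvd : (k : ℤ) ∣ (k' : ℤ) := ⟨t, by linarith⟩
    have := Int.le_of_dvd (by exact_mod_cast hk'0) hdvd
    have hlt : (k' : ℤ) < k := by exact_mod_cast hk'lt
    linarith

lemma step (k l n m : ℕ) :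
    Nsmash.mk k l (((n + k, m) : ℕ × ℕ) : WithTop (ℕ × ℕ)) =
      Nsmash.mk k l (((n, m + l) : ℕ × ℕ) : WithTop (ℕ × ℕ)) := by
  have base : Nsmash.mk k l (((k, 0) : ℕ × ℕ) : WithTop (ℕ × ℕ)) =
      Nsmash.mk k l (((0, l) : ℕ × ℕ) : WithTop (ℕ × ℕ)) :=
    mk_eq_mk.2 (AddConGen.Rel.of _ _ ⟨rfl, rfl⟩)
  have e1 : ((n + k, m) : ℕ × ℕ) = (n, m) + (k, 0) := by simp [Prod.mk_add_mk]
  have e2 : ((n, m + l) : ℕ × ℕ) = (n, m) + (0, l) := by simp [Prod.mk_add_mk]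
  rw [e1, e2, WithTop.coe_add, WithTop.coe_add, mk_add, mk_add, base]

lemma chain (k l s : ℕ) : ∀ n m : ℕ,
    Nsmash.mk k l (((n + s * k, m) : ℕ × ℕ) : WithTop (ℕ × ℕ)) =
      Nsmash.mk k l (((n, m + s * l) : ℕ × ℕ) : WithTop (ℕ × ℕ)) := by
  induction s with
  | zero => simp
  | succ s ih =>
    intro n m
    rw [show n + (s + 1) * k = (n + s * k) + k by ring, step k l (n + s * k) m,
      ih n (m + l), show m + l + s * l = m + (s + 1) * l by ring]

lemma mk_eq_of_eq (k l : ℕ) (hk0 : 0 < k) (hco : Nat.gcd k l = 1) {n m n' m' : ℕ}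
    (h : n * l + m * k = n' * l + m' * k) :
    Nsmash.mk k l (((n, m) : ℕ × ℕ) : WithTop (ℕ × ℕ)) =
      Nsmash.mk k l (((n', m') : ℕ × ℕ) : WithTop (ℕ × ℕ)) := by
  have hZ : (n : ℤ) * l + m * k = n' * l + m' * k := by exact_mod_cast h
  have hdvd : (k : ℤ) ∣ ((n : ℤ) - n') := by
    have hd : (k : ℤ) ∣ ((n : ℤ) - n') * l := ⟨(m' : ℤ) - m, by ring_nf; linarith⟩
    exact (Nat.isCoprime_iff_coprime.2 hco).dvd_of_dvd_mul_right hd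
  obtain ⟨t, ht⟩ := hdvd
  have hk0' : (k : ℤ) ≠ 0 := by exact_mod_cast hk0.ne'
  have htl : (m' : ℤ) - m = t * l := by
    have h3 : ((m' : ℤ) - m) * k = (t * l) * k := by
      have : ((n : ℤ) - n') * l = ((m' : ℤ) - m) * k := by linarith
      rw [ht] at this; linarith [this]
    exact mul_right_cancel₀ hk0' h3
  rcases le_or_gt 0 t with hts | hts
  · lift t to ℕ using hts with s
    have e1 : n = n' + s * k := by
      have : (n : ℤ) = n' + s * k := by push_cast; linarith
      exact_mod_cast this
    have e2 : m' = m + s * l := by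
      have : (m' : ℤ) = m + s * l := by push_cast; linarith
      exact_mod_cast this
    rw [e1, e2]
    exact chain k l s n' m
  · set s : ℕ := (-t).toNat with hs
    have hsc : (s : ℤ) = -t := Int.toNat_of_nonneg (by linarith)
    have e1 : n' = n + s * k := by
      have : (n' : ℤ) = n + s * k := by rw [hsc]; linarith
      exact_mod_cast this
    have e2 : m = m' + s * l := by
      have : (m : ℤ) = m' + s * l := by rw [hsc]; linarith
      exact_mod_cast this
    rw [e1, e2]
    exact (chain k l s n m').symm

end NsmashAux

open NsmashAux

/-- The binoid homomorphism `ψ : ℕ^∞ ∧_{ℕ^∞} ℕ^∞ → ℕ^∞`, `(n, m) ↦ (nl + mk)/gcd(k, l)`,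
is injective iff `gcd(k, l) = 1`; in particular `ℕ^∞ ∧_{ℕ^∞} ℕ^∞` is torsion-free iff
`k` and `l` are coprime. -/
theorem stmt_12 (k l : ℕ) (hk : 2 ≤ k) (hl : 2 ≤ l) :
    (∃ ψ : Nsmash k l →+ WithTop ℕ,
      ψ (Nsmash.mk k l ⊤) = ⊤ ∧
      ∀ n m : ℕ, ψ (Nsmash.mk k l (((n, m) : ℕ × ℕ) : WithTop (ℕ × ℕ))) =
        (((n * l + m * k) / Nat.gcd k l : ℕ) : WithTop ℕ)) ∧
    (∀ ψ : Nsmash k l →+ WithTop ℕ,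
      ψ (Nsmash.mk k l ⊤) = ⊤ →
      (∀ n m : ℕ, ψ (Nsmash.mk k l (((n, m) : ℕ × ℕ) : WithTop (ℕ × ℕ))) =
        (((n * l + m * k) / Nat.gcd k l : ℕ) : WithTop ℕ)) →
      (Function.Injective ψ ↔ Nat.gcd k l = 1)) ∧
    ((∀ c : ℕ, 1 ≤ c → ∀ a b : Nsmash k l, a ≠ Nsmash.mk k l ⊤ → b ≠ Nsmash.mk k l ⊤ →
        c • a = c • b → a = b) ↔ Nat.gcd k l = 1) := by
  set g := Nat.gcd k l with hg
  obtain ⟨k', hk'⟩ : g ∣ k := Nat.gcd_dvd_left k l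
  obtain ⟨l', hl'⟩ : g ∣ l := Nat.gcd_dvd_right k l
  have hg0 : 0 < g := Nat.gcd_pos_of_pos_left l (by omega)
  have hk'0 : 0 < k' := Nat.pos_of_ne_zero (by rintro rfl; simp at hk'; omega)
  have hl'0 : 0 < l' := Nat.pos_of_ne_zero (by rintro rfl; simp at hl'; omega)
  have hdiv : ∀ n m : ℕ, (n * l + m * k) / g = n * l' + m * k' := by
    intro n m
    have : n * l + m * k = g * (n * l' + m * k') := by rw [hk', hl']; ring
    rw [this, Nat.mul_div_cancel_left _ hg0]
  -- the homomorphism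
  have hψ_exists : ∃ ψ : Nsmash k l →+ WithTop ℕ,
      ψ (Nsmash.mk k l ⊤) = ⊤ ∧
      ∀ n m : ℕ, ψ (Nsmash.mk k l (((n, m) : ℕ × ℕ) : WithTop (ℕ × ℕ))) =
        (((n * l + m * k) / g : ℕ) : WithTop ℕ) := by
    refine ?_
    set h : ℕ × ℕ →+ ℕ :=
      { toFun := fun p => p.1 * l' + p.2 * k'
        map_zero' := by simp
        map_add' := by intro p q; simp [Prod.fst_add, Prod.snd_add]; ring } with hh
    have hker : C k l ≤ AddCon.ker h.withTopMap := by
      refine AddCon.addConGen_le.2 ?_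
      rintro x y ⟨rfl, rfl⟩
      show h.withTopMap _ = h.withTopMap _
      rw [AddMonoidHom.withTopMap_apply, WithTop.map_coe, WithTop.map_coe, WithTop.coe_inj]
      show k * l' + 0 * k' = 0 * l' + l * k'
      rw [hk', hl']; ring
    have hlift : ∀ a : WithTop (ℕ × ℕ),
        (C k l).lift h.withTopMap hker (Nsmash.mk k l a) = h.withTopMap a :=
      fun a => AddCon.lift_coe hker a
    refine ⟨(C k l).lift h.withTopMap hker, ?_, ?_⟩
    · refine (hlift ⊤).trans ?_
      rw [AddMonoidHom.withTopMap_apply]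
      exact WithTop.map_top _
    · intro n m
      refine (hlift _).trans ?_
      rw [AddMonoidHom.withTopMap_apply, WithTop.map_coe, hdiv n m]
      rfl
  -- part 2
  have part2 : ∀ ψ : Nsmash k l →+ WithTop ℕ,
      ψ (Nsmash.mk k l ⊤) = ⊤ →
      (∀ n m : ℕ, ψ (Nsmash.mk k l (((n, m) : ℕ × ℕ) : WithTop (ℕ × ℕ))) =
        (((n * l + m * k) / g : ℕ) : WithTop ℕ)) →
      (Function.Injective ψ ↔ g = 1) := by
    intro ψ htop hval
    constructor
    · intro hinj
      by_contra hg1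
      have hk'lt : k' < k := by
        have h2 : 2 * k' ≤ g * k' := Nat.mul_le_mul_right k' (by omega)
        omega
      have hvals : ψ (Nsmash.mk k l (((k', 0) : ℕ × ℕ) : WithTop (ℕ × ℕ))) =
          ψ (Nsmash.mk k l (((0, l') : ℕ × ℕ) : WithTop (ℕ × ℕ))) := by
        rw [hval, hval]
        congr 1
        have : k' * l + 0 * k = 0 * l + l' * k := by rw [hk', hl']; ring
        rw [this]
      exact mk_ne_of k l k' l' hk'0 hk'lt (hinj hvals)
    · intro hg1
      intro x y hxy
      obtain ⟨a, rfl⟩ := AddCon.mk'_surjective (c := C k l) x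
      obtain ⟨b, rfl⟩ := AddCon.mk'_surjective (c := C k l) y
      change ψ (Nsmash.mk k l a) = ψ (Nsmash.mk k l b) at hxy
      show Nsmash.mk k l a = Nsmash.mk k l b
      rcases rep a with rfl | ⟨n, m, rfl⟩ <;> rcases rep b with rfl | ⟨n', m', rfl⟩
      · rfl
      · rw [htop, hval] at hxy
        exact absurd hxy.symm WithTop.coe_ne_top
      · rw [htop, hval] at hxy
        exact absurd hxy WithTop.coe_ne_top
      · rw [hval, hval] at hxy
        have hxy' : (n * l + m * k) / g = (n' * l + m' * k) / g := by exact_mod_cast hxy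
        rw [hg1, Nat.div_one, Nat.div_one] at hxy'
        exact mk_eq_of_eq k l (by omega) hg1 hxy'
  refine ⟨hψ_exists, part2, ?_, ?_⟩
  · -- torsion-free → gcd = 1
    intro htf
    by_contra hg1
    have hk'lt : k' < k := by
      have h2 : 2 * k' ≤ g * k' := Nat.mul_le_mul_right k' (by omega)
      omega
    have hsm1 : g • Nsmash.mk k l (((k', 0) : ℕ × ℕ) : WithTop (ℕ × ℕ)) =
        Nsmash.mk k l (((k, 0) : ℕ × ℕ) : WithTop (ℕ × ℕ)) := by
      rw [← mk_nsmul, ← WithTop.coe_nsmul, Prod.smul_mk, smul_zero, smul_eq_mul, ← hk']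
    have hsm2 : g • Nsmash.mk k l (((0, l') : ℕ × ℕ) : WithTop (ℕ × ℕ)) =
        Nsmash.mk k l (((0, l) : ℕ × ℕ) : WithTop (ℕ × ℕ)) := by
      rw [← mk_nsmul, ← WithTop.coe_nsmul, Prod.smul_mk, smul_zero, smul_eq_mul, ← hl']
    have hbase : Nsmash.mk k l (((k, 0) : ℕ × ℕ) : WithTop (ℕ × ℕ)) =
        Nsmash.mk k l (((0, l) : ℕ × ℕ) : WithTop (ℕ × ℕ)) :=
      mk_eq_mk.2 (AddConGen.Rel.of _ _ ⟨rfl, rfl⟩)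
    have := htf g hg0 _ _ (mk_coe_ne_top k l k' 0) (mk_coe_ne_top k l 0 l')
      (by rw [hsm1, hsm2, hbase])
    exact mk_ne_of k l k' l' hk'0 hk'lt this
  · -- gcd = 1 → torsion-free
    intro hg1
    obtain ⟨ψ, htop, hval⟩ := hψ_exists
    have hinj : Function.Injective ψ := (part2 ψ htop hval).2 hg1
    intro c hc a b ha hb hcab
    obtain ⟨x, rfl⟩ := AddCon.mk'_surjective (c := C k l) a
    obtain ⟨y, rfl⟩ := AddCon.mk'_surjective (c := C k l) b
    change (Nsmash.mk k l x) ≠ _ at ha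
    change (Nsmash.mk k l y) ≠ _ at hb
    show Nsmash.mk k l x = Nsmash.mk k l y
    rcases rep x with rfl | ⟨n, m, rfl⟩
    · exact absurd rfl ha
    rcases rep y with rfl | ⟨n', m', rfl⟩
    · exact absurd rfl hb
    apply hinj
    have h1 : ψ (c • Nsmash.mk k l (((n, m) : ℕ × ℕ) : WithTop (ℕ × ℕ))) =
        ψ (c • Nsmash.mk k l (((n', m') : ℕ × ℕ) : WithTop (ℕ × ℕ))) := by
      exact congrArg ψ hcab
    rw [map_nsmul, map_nsmul, hval, hval, nsmul_eq_mul, nsmul_eq_mul] at h1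
    have h2 : c * ((n * l + m * k) / g) = c * ((n' * l + m' * k) / g) := by exact_mod_cast h1
    rw [hval, hval]
    exact_mod_cast Nat.eq_of_mul_eq_mul_left (by omega) h2
end

section
/- Let M be a finitely generated positive cancellative commutative binoid with generators x, y (a minimal generating set) such that M is not cancellative-free in the sense that there is a relation kx = ly ≠ ∞ with k minimal ≥ 2. Then the l with kx = ly is unique, and l is also minimal with respect to ly ∈ ⟨x⟩; moreover ⟨x⟩ ∩ ⟨y⟩ = ⟨kx⟩. -/
/-- Let `M` be a positive cancellative commutative binoid generated by `x, y`, with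
`k, l ≥ 2`, `k • x = l • y ≠ ∞` and `k` minimal with this property. Then `l` is unique,
`l` is also minimal with respect to `l • y ∈ ⟨x⟩`, and `⟨x⟩ ∩ ⟨y⟩ = ⟨k • x⟩`. -/
theorem stmt_14 {M : Type*} [AddCommMonoid M] (inf : M)
    (habs : ∀ a : M, a + inf = inf) (x y : M)
    (hgen : ∀ a : M, a = inf ∨ ∃ n m : ℕ, a = n • x + m • y)
    (hpos : ∀ a b : M, a + b = 0 → a = 0)
    (hcanc : ∀ a b c : M, a + c = b + c → a + c ≠ inf → a = b)
    (k l : ℕ) (hk : 2 ≤ k) (hl : 2 ≤ l)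
    (hrel : k • x = l • y) (hninf : k • x ≠ inf)
    (hkmin : ∀ k' l' : ℕ, 1 ≤ k' → 1 ≤ l' → k' • x = l' • y → k' • x ≠ inf → k ≤ k') :
    (∀ l' : ℕ, k • x = l' • y → l' = l) ∧
    (∀ n' l' : ℕ, 1 ≤ n' → 1 ≤ l' → n' • x = l' • y → n' • x ≠ inf → l ≤ l') ∧
    {a : M | (∃ n : ℕ, a = n • x) ∨ a = inf} ∩ {a : M | (∃ m : ℕ, a = m • y) ∨ a = inf}
      = {a : M | (∃ n : ℕ, a = n • (k • x)) ∨ a = inf} := by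
  have hsmul0 : ∀ (a : M) (n : ℕ), 1 ≤ n → n • a = 0 → a = 0 := by
    intro a n hn h0
    obtain ⟨m, rfl⟩ := Nat.exists_eq_add_of_le hn
    rw [add_smul, one_smul] at h0
    exact hpos a _ h0
  have hy0 : y ≠ 0 := by
    intro hy
    have hx0 : x = 0 := hsmul0 x k (by omega) (by rw [hrel, hy, smul_zero])
    have h0ninf : (0 : M) ≠ inf := by
      intro h; exact hninf (by rw [hx0, smul_zero, h])
    have := hkmin 1 1 le_rfl le_rfl (by rw [hx0, hy])
      (by rw [hx0, smul_zero]; exact h0ninf)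
    omega
  have hx0 : x ≠ 0 := by
    intro hx
    exact hy0 (hsmul0 y l (by omega) (by rw [← hrel, hx, smul_zero]))
  have hycanc : ∀ a b : ℕ, a • y = b • y → a • y ≠ inf → a = b := by
    have key : ∀ a b : ℕ, a ≤ b → a • y = b • y → a • y ≠ inf → a = b := by
      intro a b hab heq hi
      obtain ⟨d, rfl⟩ := Nat.exists_eq_add_of_le hab
      have hd0 : d • y = 0 := by
        apply hcanc (d • y) 0 (a • y)
        · rw [zero_add, add_comm, ← add_smul, ← heq]
        · rw [add_comm, ← add_smul, ← heq]; exact hi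
      rcases Nat.eq_zero_or_pos d with hd | hd
      · omega
      · exact absurd (hsmul0 y d hd hd0) hy0
    intro a b heq hi
    rcases le_total a b with h | h
    · exact key a b h heq hi
    · exact (key b a h heq.symm (heq ▸ hi)).symm
  have part2 : ∀ n' l' : ℕ, 1 ≤ n' → 1 ≤ l' → n' • x = l' • y → n' • x ≠ inf → l ≤ l' := by
    intro n' l' hn' hl' heq hi
    have hkn : k ≤ n' := hkmin n' l' hn' hl' heq hi
    by_contra hlt
    push_neg at hlt
    obtain ⟨r, rfl⟩ := Nat.exists_eq_add_of_le hkn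
    obtain ⟨d, rfl⟩ := Nat.exists_eq_add_of_le (le_of_lt hlt)
    have hd : 1 ≤ d := by omega
    have h1 : (d • y + r • x) + l' • y = 0 + l' • y := by
      rw [zero_add]
      calc d • y + r • x + l' • y = (l' + d) • y + r • x := by
            rw [add_smul]; abel
        _ = k • x + r • x := by rw [← hrel]
        _ = (k + r) • x := by rw [add_smul]
        _ = l' • y := heq
    have h2 : d • y + r • x = 0 := by
      apply hcanc _ _ _ h1
      rw [h1, zero_add]
      intro h; exact hi (heq.trans h)
    exact hy0 (hsmul0 y d hd (hpos _ _ h2))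
  have claim : ∀ n : ℕ, ∀ m : ℕ, 1 ≤ n → 1 ≤ m → n • x = m • y → n • x ≠ inf →
      ∃ j : ℕ, n • x = j • (k • x) := by
    intro n
    induction n using Nat.strong_induction_on with
    | _ n ih =>
      intro m hn hm heq hi
      have hkn : k ≤ n := hkmin n m hn hm heq hi
      have hlm : l ≤ m := part2 n m hn hm heq hi
      obtain ⟨r, rfl⟩ := Nat.exists_eq_add_of_le hkn
      obtain ⟨d, rfl⟩ := Nat.exists_eq_add_of_le hlm
      have hsub : r • x = d • y := by
        apply hcanc _ _ (k • x)
        · calc r • x + k • x = (k + r) • x := by rw [add_smul]; abel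
            _ = (l + d) • y := heq
            _ = d • y + k • x := by rw [add_smul, hrel]; abel
        · rw [add_comm, ← add_smul]; exact hi
      rcases Nat.eq_zero_or_pos r with hr | hr
      · subst hr
        exact ⟨1, by simp⟩
      · rcases Nat.eq_zero_or_pos d with hd | hd
        · subst hd
          simp only [zero_smul] at hsub
          exact absurd (hsmul0 x r hr hsub) hx0
        · have hri : r • x ≠ inf := by
            intro h
            apply hi
            rw [add_comm k r, add_smul, h, add_comm, habs]
          obtain ⟨j, hj⟩ := ih r (by omega) d hr hd hsub hri
          refine ⟨j + 1, ?_⟩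
          rw [add_smul j 1, one_smul, add_smul k r, hj]
          abel
  refine ⟨?_, part2, ?_⟩
  · intro l' heq
    rcases Nat.eq_zero_or_pos l' with h0 | h0
    · subst h0
      simp only [zero_smul] at heq
      exact absurd (hsmul0 y l (by omega) (hrel.symm.trans heq)) hy0
    · exact hycanc l' l (heq.symm.trans hrel) (fun h => hninf (heq.trans h))
  · ext a
    simp only [Set.mem_inter_iff, Set.mem_setOf_eq]
    constructor
    · rintro ⟨hx', hy'⟩
      rcases hx' with ⟨n, rfl⟩ | hi
      · rcases hy' with ⟨m, hm⟩ | hi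
        · rcases Nat.eq_zero_or_pos n with hn | hn
          · subst hn
            exact Or.inl ⟨0, by simp⟩
          · rcases Nat.eq_zero_or_pos m with hm0 | hm0
            · subst hm0
              simp only [zero_smul] at hm
              exact Or.inl ⟨0, by rw [hm, zero_smul]⟩
            · by_cases hi : n • x = inf
              · exact Or.inr hi
              · exact Or.inl (claim n m hn hm0 hm hi)
        · exact Or.inr hi
      · exact Or.inr hi
    · rintro (⟨j, rfl⟩ | hi)
      · refine ⟨Or.inl ⟨j * k, by rw [mul_smul]⟩, Or.inl ⟨j * l, by rw [mul_smul, ← hrel]⟩⟩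
      · exact ⟨Or.inr hi, Or.inr hi⟩
end

section
/- Let M be a two-generated commutative binoid with generators x, y such that M is integral and not cancellative, but contains a non-trivial cancellative element. Then (exactly) one generator, say x, is cancellative, and the set of cancellative elements of M together with ∞ equals the subbinoid ⟨x⟩ generated by x. -/
section Aux

variable {M : Type*} [AddCommMonoid M]

/-- Cancellativity predicate. -/
def Canc15 (inf c : M) : Prop := ∀ a b : M, c + a = c + b → c + a ≠ inf → a = b

lemma canc15_zero (inf : M) : Canc15 inf (0 : M) := by
  intro a b h _; simpa using h

lemma canc15_add {inf : M} (habs : ∀ a : M, a + inf = inf) {c d : M}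
    (hc : Canc15 inf c) (hd : Canc15 inf d) : Canc15 inf (c + d) := by
  intro a b h hne
  have h1 : c + (d + a) = c + (d + b) := by
    rw [← add_assoc, ← add_assoc]; exact h
  have hne1 : c + (d + a) ≠ inf := by rw [← add_assoc]; exact hne
  have h2 : d + a = d + b := hc _ _ h1 hne1
  have hne2 : d + a ≠ inf := by
    intro hda
    exact hne1 (by rw [hda, habs])
  exact hd _ _ h2 hne2

lemma canc15_nsmul {inf : M} (habs : ∀ a : M, a + inf = inf) {c : M}
    (hc : Canc15 inf c) (n : ℕ) : Canc15 inf (n • c) := by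
  induction n with
  | zero => simpa using canc15_zero inf
  | succ k ih =>
      have : (k + 1) • c = k • c + c := succ_nsmul c k
      rw [this]
      exact canc15_add habs ih hc

lemma canc15_of_add {inf : M} (habs : ∀ a : M, a + inf = inf)
    (hint : ∀ a b : M, a + b = inf → a = inf ∨ b = inf) {c d : M}
    (h : Canc15 inf (c + d)) (hne : c + d ≠ inf) : Canc15 inf c := by
  intro a b hab habne
  apply h
  · have e1 : c + d + a = c + a + d := add_right_comm c d a
    have e2 : c + d + b = c + b + d := add_right_comm c d b
    rw [e1, e2, hab]
  · intro hInf
    rw [add_right_comm] at hInf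
    rcases hint _ _ hInf with h1 | h2
    · exact habne h1
    · exact hne (by rw [h2, habs])

lemma canc15_inf {inf : M} (habs : ∀ a : M, a + inf = inf) : Canc15 inf inf := by
  intro a b _ hne
  exact absurd (by rw [add_comm]; exact habs a) hne

/-- The key set equality, given that `x` is cancellative and `y` is not. -/
lemma aux15 {inf : M} (habs : ∀ a : M, a + inf = inf)
    (hint : ∀ a b : M, a + b = inf → a = inf ∨ b = inf) {x y : M}
    (hgen : ∀ a : M, a = inf ∨ ∃ n m : ℕ, a = n • x + m • y)
    (hx : Canc15 inf x) (hy : ¬ Canc15 inf y) :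
    {c : M | Canc15 inf c} ∪ {inf} = {a : M | (∃ n : ℕ, a = n • x) ∨ a = inf} := by
  ext c
  simp only [Set.mem_union, Set.mem_setOf_eq, Set.mem_singleton_iff]
  constructor
  · rintro (hc | rfl)
    · by_cases hcinf : c = inf
      · exact Or.inr hcinf
      · rcases hgen c with h | ⟨n, m, rfl⟩
        · exact absurd h hcinf
        · left
          cases m with
          | zero => exact ⟨n, by simp⟩
          | succ k =>
              exfalso
              apply hy
              have e : n • x + (k + 1) • y = y + (n • x + k • y) := by
                rw [succ_nsmul]; abel
              rw [e] at hc hcinf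
              exact canc15_of_add habs hint hc hcinf
    · exact Or.inr rfl
  · rintro (⟨n, rfl⟩ | rfl)
    · exact Or.inl (canc15_nsmul habs hx n)
    · exact Or.inr rfl

end Aux

/-- A two-generated integral non-cancellative commutative binoid containing a non-trivial
cancellative element has exactly one cancellative generator, and the cancellative elements
together with `∞` form the subbinoid generated by that generator. -/
theorem stmt_15 {M : Type*} [AddCommMonoid M] (inf : M)
    (habs : ∀ a : M, a + inf = inf) (x y : M)
    (hgen : ∀ a : M, a = inf ∨ ∃ n m : ℕ, a = n • x + m • y)
    (hint : ∀ a b : M, a + b = inf → a = inf ∨ b = inf)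
    (hnotcanc : ∃ a b c : M, a + c = b + c ∧ a + c ≠ inf ∧ a ≠ b)
    (hcancel : ∃ c : M, c ≠ 0 ∧ c ≠ inf ∧
      ∀ a b : M, c + a = c + b → c + a ≠ inf → a = b) :
    ((∀ a b : M, x + a = x + b → x + a ≠ inf → a = b) ∧
      ¬(∀ a b : M, y + a = y + b → y + a ≠ inf → a = b) ∧
      {c : M | ∀ a b : M, c + a = c + b → c + a ≠ inf → a = b} ∪ {inf}
        = {a : M | (∃ n : ℕ, a = n • x) ∨ a = inf}) ∨
    ((∀ a b : M, y + a = y + b → y + a ≠ inf → a = b) ∧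
      ¬(∀ a b : M, x + a = x + b → x + a ≠ inf → a = b) ∧
      {c : M | ∀ a b : M, c + a = c + b → c + a ≠ inf → a = b} ∪ {inf}
        = {a : M | (∃ n : ℕ, a = n • y) ∨ a = inf}) := by
  obtain ⟨c, hc0, hcinf, hc⟩ := hcancel
  -- not both generators are cancellative
  have hnotboth : ¬ (Canc15 inf x ∧ Canc15 inf y) := by
    rintro ⟨hx, hy⟩
    obtain ⟨a, b, d, h1, h2, h3⟩ := hnotcanc
    apply h3
    have hd : Canc15 inf d := by
      rcases hgen d with h | ⟨n, m, rfl⟩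
      · exact absurd (by rw [h, habs]) h2
      · exact canc15_add habs (canc15_nsmul habs hx n) (canc15_nsmul habs hy m)
    refine hd a b ?_ ?_
    · rw [add_comm d a, add_comm d b]; exact h1
    · rw [add_comm d a]; exact h2
  -- symmetric generating hypothesis
  have hgen' : ∀ a : M, a = inf ∨ ∃ n m : ℕ, a = n • y + m • x := by
    intro a
    rcases hgen a with h | ⟨n, m, h⟩
    · exact Or.inl h
    · exact Or.inr ⟨m, n, by rw [h, add_comm]⟩
  rcases hgen c with h | ⟨n, m, rfl⟩
  · exact absurd h hcinf
  · cases n with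
    | succ k =>
        -- x divides c, so x is cancellative
        have e : (k + 1) • x + m • y = x + (k • x + m • y) := by
          rw [succ_nsmul]; abel
        rw [e] at hc hcinf
        have hx : Canc15 inf x := canc15_of_add habs hint hc hcinf
        have hy : ¬ Canc15 inf y := fun hy => hnotboth ⟨hx, hy⟩
        exact Or.inl ⟨hx, hy, aux15 habs hint hgen hx hy⟩
    | zero =>
        cases m with
        | zero => exact absurd (by simp) hc0
        | succ k =>
            have e : (0 : ℕ) • x + (k + 1) • y = y + (k • y + 0 • x) := by
              rw [succ_nsmul]; abel
            rw [e] at hc hcinf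
            have hy : Canc15 inf y := canc15_of_add habs hint hc hcinf
            have hx : ¬ Canc15 inf x := fun hx => hnotboth ⟨hx, hy⟩
            exact Or.inr ⟨hy, hx, aux15 habs hint hgen' hy hx⟩
end
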